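/- arXiv:1012.0129 — 4 statements merged into one kernel-verified Lean document; each statement's English description precedes it below -/
import Mathlib

section
/- Let G be a group isomorphic to ℤ^(m) ⊕ ℤ_{n_1} ⊕ … ⊕ ℤ_{n_k}, where m, k ≥ 0, m + k ≥ 1, each n_i ≥ 2, and n_{i+1} divides n_i for all 1 ≤ i ≤ k−1. Then G is capable if and only if either m ≥ 2, or m = 0, k ≥ 2 and n_1 = n_2. -/
/-- A group `G` is capable if it is isomorphic to `E / Z(E)` for some group `E`. -/
def Capable (G : Type) [Group G] : Prop :=
  ∃ (E : Type) (_ : Group E), Nonempty (G ≃* E ⧸ Subgroup.center E)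

lemma capable_congr {G H : Type} [Group G] [Group H] (e : G ≃* H) (h : Capable H) :
    Capable G := by
  obtain ⟨E, i, ⟨φ⟩⟩ := h
  exact ⟨E, i, ⟨e.trans φ⟩⟩

open scoped commutatorElement

lemma commutator_pow_right {E : Type} [Group E] (a b : E)
    (hc : ⁅a, b⁆ ∈ Subgroup.center E) (N : ℕ) : ⁅a, b ^ N⁆ = ⁅a, b⁆ ^ N := by
  have hcb : Commute ⁅a, b⁆ b := (Subgroup.mem_center_iff.mp hc b).symm
  have key : a * b * a⁻¹ = ⁅a, b⁆ * b := by
    rw [commutatorElement_def]; group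
  have : a * b ^ N * a⁻¹ = ⁅a, b⁆ ^ N * b ^ N := by
    rw [← conj_pow, key, hcb.mul_pow]
  rw [commutatorElement_def]
  calc a * b ^ N * a⁻¹ * (b ^ N)⁻¹ = (⁅a, b⁆ ^ N * b ^ N) * (b ^ N)⁻¹ := by rw [this]
    _ = ⁅a, b⁆ ^ N := by group

lemma notCapable_of {Q : Type} [CommGroup Q] (S : Set Q)
    (hS : Subgroup.closure S = ⊤) (g : Q) (N : ℕ)
    (hdiv : ∀ s ∈ S, s = g ∨ ∃ d : ℕ, d ∣ N ∧ s ^ d = 1)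
    (hne : g ^ N ≠ 1) : ¬ Capable Q := by
  rintro ⟨E, _, ⟨φ⟩⟩
  set ψ : E →* Q := φ.symm.toMonoidHom.comp (QuotientGroup.mk' (Subgroup.center E)) with hψ
  have hsurj : Function.Surjective ψ :=
    φ.symm.surjective.comp (QuotientGroup.mk'_surjective _)
  have hker : ψ.ker = Subgroup.center E := by
    ext x
    simp only [MonoidHom.mem_ker, hψ, MonoidHom.comp_apply, QuotientGroup.mk'_apply]
    rw [MulEquiv.coe_toMonoidHom, MulEquiv.map_eq_one_iff, QuotientGroup.eq_one_iff]
  -- commutators are central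
  have hcomm : ∀ a b : E, ⁅a, b⁆ ∈ Subgroup.center E := by
    intro a b
    rw [← hker, MonoidHom.mem_ker, map_commutatorElement]
    exact commutatorElement_eq_one_iff_commute.mpr (mul_comm _ _)
  obtain ⟨y, hy⟩ := hsurj g
  set C : Subgroup E := Subgroup.centralizer {y ^ N} with hC
  have hkerC : ψ.ker ≤ C := by
    intro x hx
    rw [hker] at hx
    exact Subgroup.mem_centralizer_iff.mpr fun s _ => Subgroup.mem_center_iff.mp hx s
  have hmap : Subgroup.map ψ C = ⊤ := by
    rw [eq_top_iff, ← hS, Subgroup.closure_le]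
    intro s hs
    rcases hdiv s hs with hsg | ⟨d, hdN, hsd⟩
    · refine ⟨y, ?_, hsg ▸ hy⟩
      refine Subgroup.mem_centralizer_iff.mpr ?_
      rintro z rfl
      exact (((Commute.refl y).pow_left N)).eq
    · obtain ⟨x, hx⟩ := hsurj s
      refine ⟨x, ?_, hx⟩
      have hxd : x ^ d ∈ Subgroup.center E := by
        rw [← hker, MonoidHom.mem_ker, map_pow, hx, hsd]
      have h2 : ⁅y, x⁆ ^ d = 1 := by
        rw [← commutator_pow_right y x (hcomm y x) d]
        exact commutatorElement_eq_one_iff_commute.mpr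
          (Subgroup.mem_center_iff.mp hxd y)
      have h1 : ⁅x, y⁆ ^ d = 1 := by
        rw [← commutatorElement_inv, inv_pow, h2, inv_one]
      have h3 : ⁅x, y ^ N⁆ = 1 := by
        obtain ⟨e, rfl⟩ := hdN
        rw [commutator_pow_right x y (hcomm x y), pow_mul, h1, one_pow]
      have h4 : Commute x (y ^ N) := commutatorElement_eq_one_iff_commute.mp h3
      refine Subgroup.mem_centralizer_iff.mpr ?_
      rintro z rfl
      exact h4.symm
  have hCtop : C = ⊤ := by
    have h5 := Subgroup.comap_map_eq ψ C
    rw [hmap, Subgroup.comap_top, sup_eq_left.mpr hkerC] at h5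
    exact h5.symm
  have hyN : y ^ N ∈ Subgroup.center E := by
    refine Subgroup.mem_center_iff.mpr fun z => ?_
    have hz : z ∈ C := hCtop ▸ Subgroup.mem_top z
    exact (Subgroup.mem_centralizer_iff.mp hz (y ^ N) rfl).symm
  apply hne
  rw [← hy, ← map_pow]
  rw [← hker] at hyN
  exact hyN

lemma capable_of_bilinear {A C : Type} [AddCommGroup A] [AddCommGroup C] (f : A → A → C)
    (hl : ∀ a b c, f (a + b) c = f a c + f b c)
    (hr : ∀ a b c, f a (b + c) = f a b + f a c)
    (hnd : ∀ a, (∀ b, f a b = f b a) → a = 0) :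
    Capable (Multiplicative A) := by
  have hf0 : ∀ a, f a 0 = 0 := by
    intro a
    have := hr a 0 0
    rw [add_zero] at this
    exact (left_eq_add.mp this)
  have h0f : ∀ a, f 0 a = 0 := by
    intro a
    have := hl 0 0 a
    rw [add_zero] at this
    exact (left_eq_add.mp this)
  have hfneg : ∀ a b, f a (-b) = - f a b := by
    intro a b
    have h := hr a b (-b)
    rw [add_neg_cancel, hf0] at h
    exact (neg_eq_of_add_eq_zero_right h.symm).symm
  have hnegf : ∀ a b, f (-a) b = - f a b := by
    intro a b
    have h := hl a (-a) b
    rw [add_neg_cancel, h0f] at h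
    exact (neg_eq_of_add_eq_zero_right h.symm).symm
  letI : Mul (A × C) := ⟨fun x y => (x.1 + y.1, x.2 + y.2 + f x.1 y.1)⟩
  letI : One (A × C) := ⟨(0, 0)⟩
  letI : Inv (A × C) := ⟨fun x => (-x.1, -x.2 + f x.1 x.1)⟩
  have hmul : ∀ x y : A × C, x * y = (x.1 + y.1, x.2 + y.2 + f x.1 y.1) := fun _ _ => rfl
  letI grp : Group (A × C) := Group.ofLeftAxioms
    (by
      intro x y z
      simp only [hmul]
      refine Prod.ext (add_assoc _ _ _) ?_
      simp only
      rw [hl]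
      abel_nf
      rw [hr]
      abel)
    (by
      intro x
      show ((0 : A) + x.1, (0 : C) + x.2 + f 0 x.1) = x
      rw [h0f]
      simp)
    (by
      intro x
      show (-x.1 + x.1, (-x.2 + f x.1 x.1) + x.2 + f (-x.1) x.1) = (0, 0)
      rw [hnegf]
      refine Prod.ext (by simp) (by simp))
  set π : (A × C) →* Multiplicative A :=
    MonoidHom.mk' (fun x => Multiplicative.ofAdd x.1) (fun x y => rfl) with hπ
  have hsurj : Function.Surjective π := fun a => ⟨(a.toAdd, 0), rfl⟩
  have hker : π.ker = Subgroup.center (A × C) := by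
    ext x
    rw [MonoidHom.mem_ker, Subgroup.mem_center_iff]
    constructor
    · intro hx y
      have hx1 : x.1 = 0 := by
        have : (Multiplicative.ofAdd x.1).toAdd = (1 : Multiplicative A).toAdd := by
          rw [hπ] at hx
          simp only [MonoidHom.mk'_apply] at hx
          rw [hx]
        simpa using this
      simp only [hmul, hx1]
      refine Prod.ext (by simp [add_comm]) ?_
      simp [hf0, h0f, add_comm]
    · intro hx
      have hx1 : x.1 = 0 := by
        apply hnd
        intro b
        have h := hx ((b, 0))
        simp only [hmul] at h
        have h2 := congrArg Prod.snd h
        simp only at h2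
        rw [zero_add, add_zero] at h2
        exact (add_left_cancel h2).symm
      show Multiplicative.ofAdd x.1 = 1
      rw [hx1]; rfl
  refine ⟨A × C, grp, ⟨?_⟩⟩
  exact ((QuotientGroup.quotientKerEquivOfSurjective π hsurj).symm.trans
    (QuotientGroup.quotientMulEquivOfEq hker))

section gens
variable {m k : ℕ} {n : Fin k → ℕ}

abbrev BA (m k : ℕ) (n : Fin k → ℕ) : Type := (Fin m → ℤ) × ((i : Fin k) → ZMod (n i))

def gZ (m k : ℕ) (n : Fin k → ℕ) (j : Fin m) : Multiplicative (BA m k n) :=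
  Multiplicative.ofAdd (Pi.single j 1, 0)

def gF (m k : ℕ) (n : Fin k → ℕ) (i : Fin k) : Multiplicative (BA m k n) :=
  Multiplicative.ofAdd (0, Pi.single i 1)

lemma gen_top (hn : ∀ i, 2 ≤ n i) :
    Subgroup.closure (Set.range (gZ m k n) ∪ Set.range (gF m k n)) = ⊤ := by
  haveI : ∀ i, NeZero (n i) := fun i => ⟨by have := hn i; omega⟩
  rw [Subgroup.eq_top_iff']
  intro x
  set S := Set.range (gZ m k n) ∪ Set.range (gF m k n)
  have hx : x = Multiplicative.ofAdd (x.toAdd.1, 0) * Multiplicative.ofAdd (0, x.toAdd.2) := by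
    rw [← ofAdd_add, Prod.mk_add_mk, add_zero, zero_add]
    exact (ofAdd_toAdd x).symm
  rw [hx]
  refine mul_mem ?_ ?_
  · have hu : (x.toAdd.1, (0 : (i : Fin k) → ZMod (n i)))
        = ∑ j : Fin m, ((Pi.single j (x.toAdd.1 j) : Fin m → ℤ), (0 : (i : Fin k) → ZMod (n i))) := by
      refine Prod.ext ?_ ?_
      · rw [Prod.fst_sum]
        exact (Finset.univ_sum_single x.toAdd.1).symm
      · rw [Prod.snd_sum]
        simp
    rw [hu]
    refine Finset.sum_induction _ (fun s => Multiplicative.ofAdd s ∈ Subgroup.closure S)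
      (fun a b ha hb => mul_mem ha hb)
      (by exact one_mem _) ?_
    intro j _
    show Multiplicative.ofAdd _ ∈ Subgroup.closure S
    have : Multiplicative.ofAdd ((Pi.single j (x.toAdd.1 j) : Fin m → ℤ),
        (0 : (i : Fin k) → ZMod (n i))) = (gZ m k n j) ^ (x.toAdd.1 j) := by
      apply Multiplicative.toAdd.injective
      rw [toAdd_zpow]
      show ((Pi.single j (x.toAdd.1 j) : Fin m → ℤ), (0 : (i : Fin k) → ZMod (n i)))
        = x.toAdd.1 j • ((Pi.single j 1 : Fin m → ℤ), (0 : (i : Fin k) → ZMod (n i)))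
      rw [Prod.smul_mk, smul_zero, ← Pi.single_smul, smul_eq_mul, mul_one]
    rw [this]
    refine Subgroup.zpow_mem _ (Subgroup.subset_closure ?_) _
    exact Set.mem_union_left _ ⟨j, rfl⟩
  · have hu : ((0 : Fin m → ℤ), x.toAdd.2)
        = ∑ i : Fin k, ((0 : Fin m → ℤ), (Pi.single i (x.toAdd.2 i) : (i : Fin k) → ZMod (n i))) := by
      refine Prod.ext ?_ ?_
      · rw [Prod.fst_sum]; simp
      · rw [Prod.snd_sum]
        exact (Finset.univ_sum_single x.toAdd.2).symm
    rw [hu]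
    refine Finset.sum_induction _ (fun s => Multiplicative.ofAdd s ∈ Subgroup.closure S)
      (fun a b ha hb => mul_mem ha hb)
      (by exact one_mem _) ?_
    intro i _
    show Multiplicative.ofAdd _ ∈ Subgroup.closure S
    have : Multiplicative.ofAdd ((0 : Fin m → ℤ),
        (Pi.single i (x.toAdd.2 i) : (i : Fin k) → ZMod (n i))) = (gF m k n i) ^ (x.toAdd.2 i).val := by
      apply Multiplicative.toAdd.injective
      rw [toAdd_pow]
      show ((0 : Fin m → ℤ), (Pi.single i (x.toAdd.2 i) : (i : Fin k) → ZMod (n i)))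
        = (x.toAdd.2 i).val • ((0 : Fin m → ℤ), (Pi.single i 1 : (i : Fin k) → ZMod (n i)))
      rw [Prod.smul_mk, smul_zero, ← Pi.single_smul, nsmul_eq_mul, mul_one, ZMod.natCast_zmod_val]
    rw [this]
    refine Subgroup.pow_mem _ (Subgroup.subset_closure ?_) _
    exact Set.mem_union_right _ ⟨i, rfl⟩
end gens


lemma chainDvd {k : ℕ} (n : Fin k → ℕ)
    (hdvd : ∀ i : Fin k, ∀ h : (i : ℕ) + 1 < k, n ⟨(i : ℕ) + 1, h⟩ ∣ n i)
    (j : ℕ) (hj : j < k) : ∀ d (hd : j + d < k), n ⟨j + d, hd⟩ ∣ n ⟨j, hj⟩ := by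
  intro d
  induction d with
  | zero => intro hd; exact dvd_refl _
  | succ d ih =>
      intro hd
      have h1 : j + d < k := by omega
      exact dvd_trans (hdvd ⟨j + d, h1⟩ (by omega)) (ih h1)

lemma chainDvd' {k : ℕ} (n : Fin k → ℕ)
    (hdvd : ∀ i : Fin k, ∀ h : (i : ℕ) + 1 < k, n ⟨(i : ℕ) + 1, h⟩ ∣ n i)
    (i j : Fin k) (hij : (j : ℕ) ≤ i) : n i ∣ n j := by
  have h1 : i = ⟨(j : ℕ) + ((i : ℕ) - j), by omega⟩ := by
    apply Fin.ext; simp; omega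
  rw [h1]
  exact chainDvd n hdvd j j.isLt _ _

/-- **Baer's theorem.** A finitely generated abelian group
`ℤ^(m) ⊕ ℤ_{n_1} ⊕ … ⊕ ℤ_{n_k}` (with `m + k ≥ 1`, each `n_i ≥ 2`, and
`n_{i+1} ∣ n_i`) is capable precisely when `m ≥ 2`, or `m = 0`, `k ≥ 2` and
`n_1 = n_2`. -/
theorem baer_capability (G : Type) [Group G] (m k : ℕ) (n : Fin k → ℕ)
    (hmk : 1 ≤ m + k)
    (hn : ∀ i : Fin k, 2 ≤ n i)
    (hdvd : ∀ i : Fin k, ∀ h : (i : ℕ) + 1 < k, n ⟨(i : ℕ) + 1, h⟩ ∣ n i)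
    (hG : Nonempty (G ≃* Multiplicative ((Fin m → ℤ) × ((i : Fin k) → ZMod (n i))))) :
    Capable G ↔ 2 ≤ m ∨ (m = 0 ∧ ∃ h : 2 ≤ k, n ⟨0, by omega⟩ = n ⟨1, by omega⟩) := by
  obtain ⟨e⟩ := hG
  haveI hNZ : ∀ i, NeZero (n i) := fun i => ⟨by have := hn i; omega⟩
  have gFpow : ∀ i : Fin k, gF m k n i ^ (n i) = 1 := by
    intro i
    apply Multiplicative.toAdd.injective
    rw [toAdd_pow]
    show (n i) • ((0 : Fin m → ℤ), (Pi.single i 1 : (i : Fin k) → ZMod (n i))) = (0, 0)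
    rw [Prod.smul_mk, smul_zero, ← Pi.single_smul, nsmul_eq_mul, mul_one, ZMod.natCast_self,
      Pi.single_zero]
  constructor
  · intro hc
    by_contra hrhs
    push_neg at hrhs
    obtain ⟨hm2, hrest⟩ := hrhs
    have hcQ : Capable (Multiplicative ((Fin m → ℤ) × ((i : Fin k) → ZMod (n i)))) :=
      capable_congr e.symm hc
    interval_cases m
    · -- m = 0
      have hk1 : 1 ≤ k := by omega
      have h01 := hrest rfl
      set i0 : Fin k := ⟨0, by omega⟩ with hi0
      have hdvdN : ∀ N : ℕ, ¬ (gF 0 k n i0 ^ N = 1) ∨ n i0 ∣ N := by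
        intro N
        by_cases hcon : gF 0 k n i0 ^ N = 1
        · right
          have h1 := congrFun (congrArg (Prod.snd ∘ Multiplicative.toAdd) hcon) i0
          rw [Function.comp_apply, toAdd_pow] at h1
          simp only [gF, toAdd_ofAdd, Prod.smul_mk, smul_zero, Pi.smul_apply, Pi.single_eq_same,
            toAdd_one, Prod.snd_zero, Pi.zero_apply, Function.comp_apply] at h1
          rw [nsmul_eq_mul, mul_one] at h1
          exact (ZMod.natCast_eq_zero_iff _ _).mp h1
        · left; exact hcon
      by_cases hk2 : 2 ≤ k
      · have hne01 : n i0 ≠ n ⟨1, by omega⟩ := h01 hk2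
        refine notCapable_of (Set.range (gZ 0 k n) ∪ Set.range (gF 0 k n)) (gen_top hn)
          (gF 0 k n i0) (n ⟨1, by omega⟩) ?_ ?_ hcQ
        · rintro s (⟨j, rfl⟩ | ⟨i, rfl⟩)
          · exact j.elim0
          · by_cases hi : i = i0
            · left; rw [hi]
            · right
              refine ⟨n i, chainDvd' n hdvd i ⟨1, by omega⟩ ?_, gFpow i⟩
              have hiv : (i : ℕ) ≠ 0 := fun h => hi (Fin.ext (by simp [hi0, h]))
              simp
              omega
        · intro hcon
          rcases hdvdN (n ⟨1, by omega⟩) with h | h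
          · exact h hcon
          · have h2 : n ⟨1, by omega⟩ ∣ n i0 := chainDvd' n hdvd ⟨1, by omega⟩ i0 (by simp [hi0])
            exact hne01 (Nat.dvd_antisymm h h2)
      · have hk : k = 1 := by omega
        refine notCapable_of (Set.range (gZ 0 k n) ∪ Set.range (gF 0 k n)) (gen_top hn)
          (gF 0 k n i0) 1 ?_ ?_ hcQ
        · rintro s (⟨j, rfl⟩ | ⟨i, rfl⟩)
          · exact j.elim0
          · left
            have hi : i = i0 := Fin.ext (by omega)
            rw [hi]
        · intro hcon
          rcases hdvdN 1 with h | h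
          · exact h hcon
          · have := hn i0
            have := Nat.le_of_dvd one_pos h
            omega
    · -- m = 1
      refine notCapable_of (Set.range (gZ 1 k n) ∪ Set.range (gF 1 k n)) (gen_top hn)
        (gZ 1 k n ⟨0, by omega⟩) (∏ i : Fin k, n i) ?_ ?_ hcQ
      · rintro s (⟨j, rfl⟩ | ⟨i, rfl⟩)
        · left
          congr 1
          exact Subsingleton.elim j _
        · right
          exact ⟨n i, Finset.dvd_prod_of_mem _ (Finset.mem_univ i), gFpow i⟩
      · intro hcon
        have h1 := congrFun (congrArg (Prod.fst ∘ Multiplicative.toAdd) hcon) ⟨0, by omega⟩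
        rw [Function.comp_apply, toAdd_pow] at h1
        simp only [gZ, toAdd_ofAdd, Prod.smul_mk, smul_zero, Pi.smul_apply, Pi.single_eq_same,
          toAdd_one, Prod.fst_zero, Pi.zero_apply, Function.comp_apply] at h1
        rw [nsmul_eq_mul, mul_one] at h1
        have h2 : 0 < ∏ i : Fin k, n i :=
          Finset.prod_pos fun i _ => by have := hn i; omega
        have h3 : (∏ i : Fin k, n i) = 0 := by exact_mod_cast h1
        omega
  · rintro (hm | ⟨hm0, hk2, h12⟩)
    · -- m ≥ 2 construction
      apply capable_congr e
      apply capable_of_bilinear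
        (f := fun (x y : (Fin m → ℤ) × ((i : Fin k) → ZMod (n i))) =>
          ((fun i j => x.1 i * y.1 j, fun i => x.1 i • y.2) :
            (Fin m → Fin m → ℤ) × (Fin m → (i : Fin k) → ZMod (n i))))
      · intro a b c
        refine Prod.ext ?_ ?_
        · funext i j
          show (a.1 i + b.1 i) * c.1 j = a.1 i * c.1 j + b.1 i * c.1 j
          ring
        · funext i
          show (a.1 i + b.1 i) • c.2 = a.1 i • c.2 + b.1 i • c.2
          rw [add_smul]
      · intro a b c
        refine Prod.ext ?_ ?_
        · funext i j
          show a.1 i * (b.1 j + c.1 j) = a.1 i * b.1 j + a.1 i * c.1 j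
          ring
        · funext i
          show a.1 i • (b.2 + c.2) = a.1 i • b.2 + a.1 i • c.2
          rw [smul_add]
      · intro a ha
        have e0 : Fin m := ⟨0, by omega⟩
        have e1 : Fin m := ⟨1, by omega⟩
        have hu : ∀ i : Fin m, a.1 i = 0 := by
          intro i
          have pick : ∃ j' : Fin m, j' ≠ i := by
            by_cases h : (i : ℕ) = 0
            · exact ⟨⟨1, by omega⟩, Fin.ne_of_val_ne (by simp; omega)⟩
            · exact ⟨⟨0, by omega⟩, Fin.ne_of_val_ne (by simp; omega)⟩
          obtain ⟨j', hj'⟩ := pick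
          have h1 := congrFun (congrFun (congrArg Prod.fst
            (ha ((Pi.single j' 1 : Fin m → ℤ), 0))) i) j'
          simp only at h1
          rw [Pi.single_eq_same, Pi.single_eq_of_ne (Ne.symm hj'), mul_one, zero_mul] at h1
          exact h1
        have ha2 : a.2 = 0 := by
          have h1 := congrFun (congrArg Prod.snd
            (ha ((Pi.single (⟨0, by omega⟩ : Fin m) 1 : Fin m → ℤ), 0))) ⟨0, by omega⟩
          simp only at h1
          rw [Pi.single_eq_same, one_smul, smul_zero] at h1
          exact h1.symm
        exact Prod.ext (funext hu) ha2
    · -- m = 0, k ≥ 2, n 0 = n 1 construction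
      apply capable_congr e
      have hk0 : 0 < k := by omega
      have hk1 : 1 < k := by omega
      set i0 : Fin k := ⟨0, hk0⟩ with hi0
      set i1 : Fin k := ⟨1, hk1⟩ with hi1
      have hd0 : ∀ j : Fin k, n j ∣ n i0 := fun j => chainDvd' n hdvd j i0 (by simp [hi0])
      apply capable_of_bilinear
        (f := fun (x y : (Fin m → ℤ) × ((i : Fin k) → ZMod (n i))) =>
          ((fun j => (ZMod.castHom (hd0 j) (ZMod (n j)) (x.2 i0)) * y.2 j) :
            (j : Fin k) → ZMod (n j)))
      · intro a b c
        funext j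
        show ZMod.castHom (hd0 j) (ZMod (n j)) (a.2 i0 + b.2 i0) * c.2 j = _
        rw [map_add, add_mul]
        rfl
      · intro a b c
        funext j
        show ZMod.castHom (hd0 j) (ZMod (n j)) (a.2 i0) * (b.2 j + c.2 j) = _
        rw [mul_add]
        rfl
      · intro a ha
        have ha1 : a.1 = 0 := by
          funext i
          exact absurd i.isLt (by omega)
        have key2 : ∀ j : Fin k, j ≠ i0 → a.2 j = 0 := by
          intro j hj
          have h1 := congrFun (ha ((0 : Fin m → ℤ),
            (Pi.single i0 1 : (i : Fin k) → ZMod (n i)))) j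
          simp only at h1
          rw [Pi.single_eq_same, map_one, one_mul, Pi.single_eq_of_ne hj, mul_zero] at h1
          exact h1.symm
        have key0 : a.2 i0 = 0 := by
          have h1 := congrFun (ha ((0 : Fin m → ℤ),
            (Pi.single i1 1 : (i : Fin k) → ZMod (n i)))) i1
          simp only at h1
          have hne : i0 ≠ i1 := Fin.ne_of_val_ne (by simp [hi0, hi1])
          rw [Pi.single_eq_same, mul_one, Pi.single_eq_of_ne hne, map_zero, zero_mul] at h1
          -- h1 : castHom _ (ZMod (n i1)) (a.2 i0) = 0
          set z := a.2 i0 with hz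
          have h2 : ((z.val : ℕ) : ZMod (n i1)) = 0 := by
            rw [ZMod.castHom_apply] at h1
            rw [ZMod.natCast_val, h1]
          have h3 : n i1 ∣ z.val := (ZMod.natCast_eq_zero_iff _ _).mp h2
          have h4 : z.val < n i0 := ZMod.val_lt z
          have h5 : z.val = 0 := Nat.eq_zero_of_dvd_of_lt h3 (by
            have h6 : n i0 = n i1 := h12
            omega)
          exact (ZMod.val_eq_zero z).mp h5
        refine Prod.ext ha1 ?_
        funext j
        by_cases hj : j = i0
        · rw [hj]; exact key0
        · exact key2 j hj
end

section
/- Let c ≥ 1 and let G be a finitely generated abelian group. Then G is N_c-capable if and only if G is capable. -/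
/-- A group `G` is `N_c`-capable if it is isomorphic to `E / Z_c(E)` for some group `E`,
where `Z_c(E)` is the `c`-th term of the upper central series of `E`
(the marginal subgroup with respect to the variety of nilpotent groups of class at most `c`). -/
def NcCapable (c : ℕ) (G : Type) [Group G] : Prop :=
  ∃ (E : Type) (_ : Group E), Nonempty (G ≃* E ⧸ Subgroup.upperCentralSeries E c)

lemma ncCapable_of_mulEquiv {c : ℕ} {G H : Type} [Group G] [Group H] (e : G ≃* H)
    (h : NcCapable c H) : NcCapable c G := by
  obtain ⟨E, iE, ⟨f⟩⟩ := h
  exact ⟨E, iE, ⟨e.trans f⟩⟩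

lemma capable_iff_ncCapable_one {G : Type} [Group G] : Capable G ↔ NcCapable 1 G := by
  constructor
  · rintro ⟨E, iE, ⟨f⟩⟩
    refine ⟨E, iE, ⟨f.trans (QuotientGroup.quotientMulEquivOfEq ?_)⟩⟩
    exact (Subgroup.upperCentralSeries_one E).symm
  · rintro ⟨E, iE, ⟨f⟩⟩
    refine ⟨E, iE, ⟨f.trans (QuotientGroup.quotientMulEquivOfEq ?_)⟩⟩
    exact Subgroup.upperCentralSeries_one E

lemma ncCapable_of_succ {n : ℕ} {G : Type} [Group G] (h : NcCapable (n + 1) G) :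
    NcCapable n G := by
  obtain ⟨E, iE, ⟨f⟩⟩ := h
  refine ⟨E ⧸ Subgroup.center E, inferInstance, ⟨f.trans ?_⟩⟩
  have hle : Subgroup.center E ≤ Subgroup.upperCentralSeries E (n + 1) := by
    rw [← Subgroup.upperCentralSeries_one E]
    exact Subgroup.upperCentralSeries_mono E (Nat.one_le_iff_ne_zero.mpr (Nat.succ_ne_zero n))
  have hmap : (Subgroup.upperCentralSeries E (n + 1)).map (QuotientGroup.mk' (Subgroup.center E))
      = Subgroup.upperCentralSeries (E ⧸ Subgroup.center E) n := by
    rw [← Subgroup.comap_upperCentralSeries_quotient_center (G := E) n]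
    exact Subgroup.map_comap_eq_self_of_surjective (QuotientGroup.mk'_surjective _) _
  haveI : ((Subgroup.upperCentralSeries E (n + 1)).map
      (QuotientGroup.mk' (Subgroup.center E))).Normal := hmap ▸ inferInstance
  exact (QuotientGroup.quotientQuotientEquivQuotient _ _ hle).symm.trans
    (QuotientGroup.quotientMulEquivOfEq hmap)
lemma capable_of_ncCapable {c : ℕ} (hc : 1 ≤ c) {G : Type} [Group G]
    (h : NcCapable c G) : Capable G := by
  rw [capable_iff_ncCapable_one]
  obtain ⟨k, rfl⟩ : ∃ k, c = 1 + k := ⟨c - 1, by omega⟩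
  clear hc
  induction k with
  | zero => exact h
  | succ k ih => exact ih (by rw [show 1 + (k+1) = (1+k) + 1 by omega] at h; exact ncCapable_of_succ h)


namespace BEConstruction

/-- subgroup of automorphisms α with α m / m ∈ B for all m. -/
def shiftStab {X : Type*} [Group X] (B : Subgroup X) : Subgroup (MulAut X) where
  carrier := {α | ∀ m : X, α m / m ∈ B}
  one_mem' := by intro m; simpa using one_mem B
  mul_mem' := by
    intro α β hα hβ m
    have : (α * β) m / m = (α (β m) / (β m)) * (β m / m) := by
      simp [MulAut.mul_apply, div_mul_div_cancel]
    rw [this]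
    exact mul_mem (hα _) (hβ _)
  inv_mem' := by
    intro α hα m
    have h := hα (α⁻¹ m)
    rw [MulAut.apply_inv_self] at h
    have : α⁻¹ m / m = (m / α⁻¹ m)⁻¹ := by simp
    rw [this]
    exact inv_mem h

lemma mem_shiftStab {X : Type*} [Group X] {B : Subgroup X} {α : MulAut X} :
    α ∈ shiftStab B ↔ ∀ m : X, α m / m ∈ B := Iff.rfl

/-- subgroup of automorphisms preserving A and shifting A into B. -/
def relStab {X : Type*} [Group X] (A B : Subgroup X) : Subgroup (MulAut X) where
  carrier := {α | (∀ m : X, m ∈ A ↔ α m ∈ A) ∧ ∀ m ∈ A, α m / m ∈ B}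
  one_mem' := ⟨fun m => by simp, fun m _ => by simpa using one_mem B⟩
  mul_mem' := by
    rintro α β ⟨hα1, hα2⟩ ⟨hβ1, hβ2⟩
    refine ⟨fun m => (hβ1 m).trans (hα1 (β m)), fun m hm => ?_⟩
    have : (α * β) m / m = (α (β m) / (β m)) * (β m / m) := by
      simp [MulAut.mul_apply, div_mul_div_cancel]
    rw [this]
    exact mul_mem (hα2 _ ((hβ1 m).mp hm)) (hβ2 _ hm)
  inv_mem' := by
    rintro α ⟨hα1, hα2⟩
    have key : ∀ m : X, m ∈ A ↔ α⁻¹ m ∈ A := by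
      intro m
      rw [hα1 (α⁻¹ m), MulAut.apply_inv_self]
    refine ⟨key, fun m hm => ?_⟩
    have h := hα2 (α⁻¹ m) ((key m).mp hm)
    rw [MulAut.apply_inv_self] at h
    have h2 : α⁻¹ m / m = (m / (α⁻¹ m))⁻¹ := by simp
    rw [h2]
    exact inv_mem h

variable (M : Type) [CommGroup M] (c : ℕ)

/-- Truncated "polynomials" of degree ≤ c with coefficients in M. -/
def trunc : Subgroup (ℕ → M) where
  carrier := {f | ∀ i, c < i → f i = 1}
  one_mem' := fun _ _ => rfl
  mul_mem' := by intro f g hf hg i hi; simp [Pi.mul_apply, hf i hi, hg i hi]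
  inv_mem' := by intro f hf i hi; simp [Pi.inv_apply, hf i hi]

/-- multiplication by 1 + t on truncated polynomials, as a raw map. -/
def thetaFun (f : ℕ → M) : ℕ → M :=
  fun i => if i ≤ c then (if i = 0 then f 0 else f i * f (i - 1)) else 1

/-- multiplication by (1 + t)⁻¹, as a raw map. -/
def psiFun (f : ℕ → M) : ℕ → M
  | 0 => f 0
  | (i + 1) => if i + 1 ≤ c then f (i + 1) * (psiFun f i)⁻¹ else 1

lemma thetaFun_mul (f g : ℕ → M) : thetaFun M c (f * g) = thetaFun M c f * thetaFun M c g := by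
  funext i
  simp only [thetaFun, Pi.mul_apply]
  by_cases h : i ≤ c
  · by_cases h0 : i = 0 <;> simp [h, h0, mul_mul_mul_comm]
  · simp [h]

lemma thetaFun_mem (f : ℕ → M) (hf : f ∈ trunc M c) : thetaFun M c f ∈ trunc M c := by
  intro i hi
  simp [thetaFun, Nat.not_le.mpr hi]

lemma psiFun_mem (hc : 1 ≤ c) (f : ℕ → M) : psiFun M c f ∈ trunc M c := by
  intro i hi
  cases i with
  | zero => omega
  | succ j => simp [psiFun, Nat.not_le.mpr hi]

lemma psiFun_thetaFun (hc : 1 ≤ c) (f : ℕ → M) (hf : f ∈ trunc M c) :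
    psiFun M c (thetaFun M c f) = f := by
  funext i
  induction i with
  | zero => simp [psiFun, thetaFun]
  | succ j ih =>
    by_cases h : j + 1 ≤ c
    · have hj0 : j + 1 ≠ 0 := Nat.succ_ne_zero j
      simp only [psiFun, h, if_pos, ih]
      simp only [thetaFun, h, if_pos, hj0, if_neg, Nat.add_sub_cancel]
      simp [ih]
    · have : c < j + 1 := Nat.not_le.mp h
      simp only [psiFun, h, if_neg]
      exact (hf _ this).symm

lemma thetaFun_psiFun (hc : 1 ≤ c) (f : ℕ → M) (hf : f ∈ trunc M c) :
    thetaFun M c (psiFun M c f) = f := by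
  funext i
  cases i with
  | zero => simp [thetaFun, psiFun, Nat.one_le_iff_ne_zero.mp hc]
  | succ j =>
    by_cases h : j + 1 ≤ c
    · simp only [thetaFun, h, if_pos, Nat.succ_ne_zero, if_neg, Nat.add_sub_cancel]
      simp [psiFun, h]
    · simp only [thetaFun, h, if_neg]
      exact (hf _ (Nat.not_le.mp h)).symm

variable (hc : 1 ≤ c)

/-- The automorphism θ = multiplication by (1+t) of the truncated group. -/
def theta : MulAut ↥(trunc M c) where
  toFun n := ⟨thetaFun M c n.1, thetaFun_mem M c n.1 n.2⟩
  invFun n := ⟨psiFun M c n.1, psiFun_mem M c hc n.1⟩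
  left_inv n := Subtype.ext (psiFun_thetaFun M c hc n.1 n.2)
  right_inv n := Subtype.ext (thetaFun_psiFun M c hc n.1 n.2)
  map_mul' a b := Subtype.ext (thetaFun_mul M c a.1 b.1)

lemma theta_apply_coe (n : ↥(trunc M c)) (i : ℕ) :
    ((theta M c hc n : ↥(trunc M c)) : ℕ → M) i
      = if i ≤ c then (if i = 0 then n.1 0 else n.1 i * n.1 (i - 1)) else 1 := rfl

lemma theta_inv_apply_coe (n : ↥(trunc M c)) :
    (((theta M c hc)⁻¹ n : ↥(trunc M c)) : ℕ → M) = psiFun M c n.1 := rfl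

end BEConstruction

namespace BEConstruction

variable (M : Type) [CommGroup M] (c : ℕ) (hc : 1 ≤ c)

/-- the subgroup of truncated polynomials vanishing in degrees < c+1-j. -/
def lowZero (j : ℕ) : Subgroup ↥(trunc M c) where
  carrier := {n | ∀ i, i < c + 1 - j → n.1 i = 1}
  one_mem' := fun _ _ => rfl
  mul_mem' := by intro f g hf hg i hi; simp [hf i hi, hg i hi]
  inv_mem' := by intro f hf i hi; simp [hf i hi]

lemma mem_lowZero_iff {j : ℕ} {n : ↥(trunc M c)} :
    n ∈ lowZero M c j ↔ ∀ i, i < c + 1 - j → n.1 i = 1 := Iff.rfl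

lemma lowZero_mono {j k : ℕ} (h : j ≤ k) : lowZero M c j ≤ lowZero M c k := by
  intro n hn i hi
  exact hn i (lt_of_lt_of_le hi (by omega))

lemma mem_lowZero_zero {n : ↥(trunc M c)} : n ∈ lowZero M c 0 ↔ n = 1 := by
  constructor
  · intro h
    ext i
    by_cases hi : i < c + 1
    · exact h i hi
    · exact n.2 i (by omega)
  · rintro rfl; exact (lowZero M c 0).one_mem

lemma mem_lowZero_c {n : ↥(trunc M c)} : n ∈ lowZero M c c ↔ n.1 0 = 1 := by
  constructor
  · intro h; exact h 0 (by omega)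
  · intro h i hi
    have : i = 0 := by omega
    rwa [this]

/-- coordinate 0 is preserved by all powers of θ. -/
lemma theta_zpow_coe_zero (k : ℤ) (n : ↥(trunc M c)) :
    (((theta M c hc ^ k) n : ↥(trunc M c)) : ℕ → M) 0 = n.1 0 := by
  have : theta M c hc ∈ Subgroup.mk
      (Submonoid.mk ⟨{α : MulAut ↥(trunc M c) | ∀ m, ((α m : ↥(trunc M c)) : ℕ → M) 0 = m.1 0},
        by intro a b ha hb m; rw [MulAut.mul_apply, ha, hb]⟩ (fun m => rfl))
      (by intro α hα m
          have := hα (α⁻¹ m)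
          rw [MulAut.apply_inv_self] at this
          exact this.symm) := by
    intro m
    simp [theta_apply_coe]
  exact Subgroup.zpow_mem _ this k n

lemma theta_coe_one (n : ↥(trunc M c)) :
    ((theta M c hc n : ↥(trunc M c)) : ℕ → M) 1 = n.1 1 * n.1 0 := by
  rw [theta_apply_coe]
  simp [hc]

lemma theta_inv_coe_one (n : ↥(trunc M c)) :
    (((theta M c hc)⁻¹ n : ↥(trunc M c)) : ℕ → M) 1 = n.1 1 * (n.1 0)⁻¹ := by
  rw [theta_inv_apply_coe]
  simp [psiFun, hc]

/-- coordinate 1 of θ^k. -/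
lemma theta_zpow_coe_one (k : ℤ) (n : ↥(trunc M c)) :
    (((theta M c hc ^ k) n : ↥(trunc M c)) : ℕ → M) 1 = n.1 1 * (n.1 0) ^ k := by
  have coe0 : ∀ m : ↥(trunc M c), ((theta M c hc m : ↥(trunc M c)) : ℕ → M) 0 = m.1 0 := by
    intro m; rw [theta_apply_coe]; simp
  have coe0' : ∀ m : ↥(trunc M c), (((theta M c hc)⁻¹ m : ↥(trunc M c)) : ℕ → M) 0 = m.1 0 := by
    intro m
    have := theta_zpow_coe_zero M c hc (-1) m
    rwa [zpow_neg_one] at this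
  induction k using Int.induction_on generalizing n with
  | zero => simp
  | succ k ih =>
    have hsplit : theta M c hc ^ ((k : ℤ) + 1) = theta M c hc ^ (k : ℤ) * theta M c hc := by
      rw [zpow_add, zpow_one]
    rw [hsplit, MulAut.mul_apply, ih (theta M c hc n), theta_coe_one M c hc n, coe0,
      mul_assoc, ← zpow_one_add]
    ring_nf
  | pred k ih =>
    have hsplit : theta M c hc ^ (-(k : ℤ) - 1)
        = theta M c hc ^ (-(k : ℤ)) * (theta M c hc)⁻¹ := by
      rw [sub_eq_add_neg, zpow_add, zpow_neg_one]
    rw [hsplit, MulAut.mul_apply, ih ((theta M c hc)⁻¹ n), theta_inv_coe_one M c hc n, coe0',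
      mul_assoc, ← zpow_neg_one, ← zpow_add]
    ring_nf

end BEConstruction

namespace BEConstruction

variable (M : Type) [CommGroup M] (c : ℕ) (hc : 1 ≤ c)

lemma theta_div_coe (n : ↥(trunc M c)) (i : ℕ) :
    ((theta M c hc n / n : ↥(trunc M c)) : ℕ → M) i
      = if 1 ≤ i ∧ i ≤ c then n.1 (i - 1) else 1 := by
  have : ((theta M c hc n / n : ↥(trunc M c)) : ℕ → M) i
      = ((theta M c hc n : ↥(trunc M c)) : ℕ → M) i / n.1 i := rfl
  rw [this, theta_apply_coe]
  by_cases h1 : i ≤ c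
  · by_cases h0 : i = 0
    · subst h0; simp
    · simp [h1, h0, Nat.one_le_iff_ne_zero.mpr h0]
  · simp only [h1, if_neg, if_false]
    have := n.2 i (Nat.not_le.mp h1)
    simp [this, h1]

lemma theta_fix_of_lowZero_one {n : ↥(trunc M c)} (hn : n ∈ lowZero M c 1) :
    theta M c hc n = n := by
  have key : theta M c hc n / n = 1 := by
    ext i
    rw [theta_div_coe]
    by_cases h : 1 ≤ i ∧ i ≤ c
    · have : i - 1 < c + 1 - 1 := by omega
      simp [h, hn (i-1) this]
    · simp [h]
  exact div_eq_one.mp key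

lemma lowZero_one_of_theta_fix {n : ↥(trunc M c)} (h : theta M c hc n = n) :
    n ∈ lowZero M c 1 := by
  intro i hi
  have h2 : i + 1 ≤ c := by omega
  have hcong := congrArg (fun m : ↥(trunc M c) => (m : ℕ → M) (i + 1)) h
  simp only [theta_apply_coe] at hcong
  rw [if_pos h2, if_neg (Nat.succ_ne_zero i), Nat.add_sub_cancel] at hcong
  exact mul_eq_left.mp hcong

lemma theta_mem_relStab (j : ℕ) :
    theta M c hc ∈ relStab (lowZero M c (j + 1)) (lowZero M c j) := by
  constructor
  · intro n
    constructor
    · intro hn i hi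
      rw [theta_apply_coe]
      by_cases h0 : i = 0
      · subst h0; simp only [Nat.zero_le, if_pos, if_pos rfl]
        exact hn 0 (by omega)
      · have hic : i ≤ c := by omega
        rw [if_pos hic, if_neg h0, hn i (by omega), hn (i-1) (by omega), one_mul]
    · intro hθ
      intro i
      induction i with
      | zero =>
        intro hi
        have := hθ 0 hi
        rw [theta_apply_coe] at this
        simpa using this
      | succ m ihm =>
        intro hi
        have hmem : n.1 m = 1 := ihm (by omega)
        have hthis := hθ (m+1) hi
        rw [theta_apply_coe] at hthis
        have hmc : m + 1 ≤ c := by omega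
        rw [if_pos hmc, if_neg (Nat.succ_ne_zero m), Nat.add_sub_cancel, hmem, mul_one] at hthis
        exact hthis
  · intro n hn i hi
    rw [theta_div_coe]
    by_cases h : 1 ≤ i ∧ i ≤ c
    · have : i - 1 < c + 1 - (j + 1) := by omega
      simp [h, hn (i-1) this]
    · simp [h]

lemma lowZero_succ_of_theta_div {n : ↥(trunc M c)} {j : ℕ}
    (h : theta M c hc n / n ∈ lowZero M c j) : n ∈ lowZero M c (j + 1) := by
  intro i hi
  have h1 : i + 1 < c + 1 - j := by omega
  have := h (i + 1) h1
  rw [theta_div_coe] at this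
  have h2 : 1 ≤ i + 1 ∧ i + 1 ≤ c := by omega
  simpa [h2] using this

end BEConstruction

namespace BEConstruction

variable (M : Type) [CommGroup M] (c : ℕ) (hc : 1 ≤ c)

/-- The action of ℤ on the truncated group, generator acting as θ. -/
def phiAct : Multiplicative ℤ →* MulAut ↥(trunc M c) :=
  zpowersHom _ (theta M c hc)

/-- The witness group `E = M[t]/(t^{c+1}) ⋊ ℤ`. -/
abbrev Egrp : Type := SemidirectProduct ↥(trunc M c) (Multiplicative ℤ) (phiAct M c hc)

instance : Group (Egrp M c hc) := SemidirectProduct.instGroup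

lemma phiAct_apply (h : Multiplicative ℤ) :
    phiAct M c hc h = theta M c hc ^ h.toAdd := rfl

/-- candidate for the j-th term of the upper central series. -/
def Sgrp (j : ℕ) : Subgroup (Egrp M c hc) where
  carrier := {x | x.left ∈ lowZero M c j ∧
    theta M c hc ^ (Multiplicative.toAdd x.right) ∈ shiftStab (lowZero M c (j - 1))}
  one_mem' := by
    constructor
    · exact (lowZero M c j).one_mem
    · have : Multiplicative.toAdd (1 : Multiplicative ℤ) = 0 := rfl
      rw [SemidirectProduct.one_right, this, zpow_zero]
      exact (shiftStab _).one_mem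
  mul_mem' := by
    rintro x y ⟨hx1, hx2⟩ ⟨hy1, hy2⟩
    constructor
    · rw [SemidirectProduct.mul_left, phiAct_apply]
      refine mul_mem hx1 ?_
      have hsh := hx2 y.left
      have : (theta M c hc ^ x.right.toAdd) y.left
          = y.left * ((theta M c hc ^ x.right.toAdd) y.left / y.left) := by
        rw [mul_div_cancel]
      rw [this]
      exact mul_mem hy1 (lowZero_mono M c (Nat.sub_le j 1) hsh)
    · rw [SemidirectProduct.mul_right, toAdd_mul, zpow_add]
      exact mul_mem hx2 hy2
  inv_mem' := by
    rintro x ⟨hx1, hx2⟩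
    have hinv : theta M c hc ^ (Multiplicative.toAdd x⁻¹.right)
        = (theta M c hc ^ (Multiplicative.toAdd x.right))⁻¹ := by
      rw [SemidirectProduct.inv_right, toAdd_inv, zpow_neg]
    constructor
    · rw [SemidirectProduct.inv_left, phiAct_apply, toAdd_inv, zpow_neg]
      set α := theta M c hc ^ (Multiplicative.toAdd x.right)
      have hsh := (inv_mem hx2 : α⁻¹ ∈ shiftStab (lowZero M c (j-1))) x.left⁻¹
      have : α⁻¹ x.left⁻¹ = x.left⁻¹ * (α⁻¹ x.left⁻¹ / x.left⁻¹) := by rw [mul_div_cancel]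
      rw [this]
      exact mul_mem (inv_mem hx1) (lowZero_mono M c (Nat.sub_le j 1) hsh)
    · rw [hinv]
      exact inv_mem hx2

lemma mem_Sgrp_iff {j : ℕ} {x : Egrp M c hc} :
    x ∈ Sgrp M c hc j ↔ x.left ∈ lowZero M c j ∧
      theta M c hc ^ (Multiplicative.toAdd x.right) ∈ shiftStab (lowZero M c (j - 1)) :=
  Iff.rfl

/-- The commutator formula in E. -/
lemma comm_formula (x y : Egrp M c hc) :
    x * y * x⁻¹ * y⁻¹ = ⟨(phiAct M c hc x.right y.left / y.left) *
      (phiAct M c hc y.right x.left / x.left)⁻¹, 1⟩ := by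
  obtain ⟨n, h⟩ := x
  obtain ⟨m, g⟩ := y
  have hright : h * g * h⁻¹ = g := by
    rw [mul_comm h g, mul_assoc, mul_inv_cancel, mul_one]
  apply SemidirectProduct.ext
  · show (n * phiAct M c hc h m) * phiAct M c hc (h*g) (phiAct M c hc h⁻¹ n⁻¹)
        * phiAct M c hc (h*g*h⁻¹) (phiAct M c hc g⁻¹ m⁻¹) = _
    rw [← MulAut.mul_apply, ← map_mul]
    rw [← MulAut.mul_apply, ← map_mul]
    rw [hright, mul_inv_cancel, map_one]
    show n * phiAct M c hc h m * phiAct M c hc g n⁻¹ * m⁻¹ = _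
    rw [map_inv]
    show _ = (phiAct M c hc h m / m) * (phiAct M c hc g n / n)⁻¹
    simp [div_eq_mul_inv, mul_inv_rev, inv_inv, mul_comm, mul_left_comm, mul_assoc]
  · show h * g * h⁻¹ * g⁻¹ = 1
    rw [hright, mul_inv_cancel]

end BEConstruction

namespace BEConstruction

variable (M : Type) [CommGroup M] (c : ℕ) (hc : 1 ≤ c)

lemma mem_Sgrp_left_iff {j : ℕ} {w : ↥(trunc M c)} :
    (⟨w, 1⟩ : Egrp M c hc) ∈ Sgrp M c hc j ↔ w ∈ lowZero M c j := by
  rw [mem_Sgrp_iff]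
  constructor
  · exact fun h => h.1
  · intro h
    refine ⟨h, ?_⟩
    have : Multiplicative.toAdd ((⟨w, 1⟩ : Egrp M c hc)).right = 0 := rfl
    rw [this, zpow_zero]
    exact (shiftStab _).one_mem

lemma center_eq : Subgroup.center (Egrp M c hc) = Sgrp M c hc 1 := by
  ext x
  rw [Subgroup.mem_center_iff, mem_Sgrp_iff]
  constructor
  · intro hx
    constructor
    · -- x.left ∈ lowZero 1, from commuting with ⟨1, ofAdd 1⟩
      have hcomm := hx ⟨1, Multiplicative.ofAdd 1⟩
      have hleft : (1 : ↥(trunc M c)) * (phiAct M c hc (Multiplicative.ofAdd 1)) x.left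
          = x.left * (phiAct M c hc x.right) 1 := congrArg SemidirectProduct.left hcomm
      rw [one_mul, map_one (phiAct M c hc x.right), mul_one, phiAct_apply, toAdd_ofAdd,
        zpow_one] at hleft
      exact lowZero_one_of_theta_fix M c hc hleft
    · intro m
      have hcomm := hx ⟨m, 1⟩
      have hleft : m * (phiAct M c hc (1 : Multiplicative ℤ)) x.left
          = x.left * (phiAct M c hc x.right) m := congrArg SemidirectProduct.left hcomm
      rw [map_one (phiAct M c hc), MulAut.one_apply, mul_comm m x.left, phiAct_apply] at hleft
      have h2 : (theta M c hc ^ (Multiplicative.toAdd x.right)) m = m :=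
        (mul_left_cancel hleft).symm
      have : (theta M c hc ^ (Multiplicative.toAdd x.right)) m / m = 1 := div_eq_one.mpr h2
      rw [this]
      exact Subgroup.one_mem _
  · rintro ⟨h1, h2⟩ g
    have hfix : ∀ l : ℤ, (theta M c hc ^ l) x.left = x.left := by
      intro l
      have hθ : theta M c hc ∈ MulAction.stabilizer (MulAut ↥(trunc M c)) x.left := by
        rw [MulAction.mem_stabilizer_iff]
        exact theta_fix_of_lowZero_one M c hc h1
      have := Subgroup.zpow_mem _ hθ l
      rw [MulAction.mem_stabilizer_iff] at this
      exact this
    have hallm : ∀ m : ↥(trunc M c), (theta M c hc ^ (Multiplicative.toAdd x.right)) m = m := by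
      intro m
      have := h2 m
      rw [Nat.sub_self] at this
      rw [mem_lowZero_zero] at this
      exact div_eq_one.mp this
    apply SemidirectProduct.ext
    · show g.left * (phiAct M c hc g.right) x.left = x.left * (phiAct M c hc x.right) g.left
      rw [phiAct_apply, phiAct_apply, hallm g.left, hfix (Multiplicative.toAdd g.right)]
      exact mul_comm g.left x.left
    · show g.right * x.right = x.right * g.right
      exact mul_comm g.right x.right

lemma ucs_eq (j : ℕ) (hj : 1 ≤ j) :
    Subgroup.upperCentralSeries (Egrp M c hc) j = Sgrp M c hc j := by
  induction j with
  | zero => omega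
  | succ j ih =>
    rcases Nat.eq_or_lt_of_le hj with h1 | h1
    · have hj0 : j = 0 := by omega
      subst hj0
      rw [Subgroup.upperCentralSeries_one, center_eq]
    · have hj1 : 1 ≤ j := by omega
      have ihj := ih hj1
      ext x
      rw [Subgroup.mem_upperCentralSeries_succ_iff, mem_Sgrp_iff]
      constructor
      · intro hx
        constructor
        · -- use y = ⟨1, ofAdd 1⟩
          have := hx ⟨1, Multiplicative.ofAdd 1⟩
          rw [commutatorElement_def, comm_formula, ihj, mem_Sgrp_left_iff] at this
          simp only [phiAct_apply, map_one, toAdd_ofAdd, zpow_one, div_one] at this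
          have hdiv : theta M c hc x.left / x.left ∈ lowZero M c j := by
            have h3 := (lowZero M c j).inv_mem this
            simpa using h3
          have := lowZero_succ_of_theta_div M c hc hdiv
          simpa using this
        · intro m
          have := hx ⟨m, 1⟩
          rw [commutatorElement_def, comm_formula, ihj, mem_Sgrp_left_iff] at this
          simp only [phiAct_apply, toAdd_one, zpow_zero, MulAut.one_apply, div_self',
            inv_one, mul_one] at this
          have hj' : j + 1 - 1 = j := by omega
          rw [hj']
          simpa using this
      · rintro ⟨h1mem, h2⟩ y
        rw [commutatorElement_def, comm_formula, ihj, mem_Sgrp_left_iff]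
        have hj' : j + 1 - 1 = j := by omega
        rw [hj'] at h2
        refine mul_mem ?_ (inv_mem ?_)
        · exact h2 y.left
        · have hrel := Subgroup.zpow_mem _ (theta_mem_relStab M c hc j)
            (Multiplicative.toAdd y.right)
          rw [phiAct_apply]
          exact hrel.2 x.left h1mem

end BEConstruction

namespace BEConstruction

variable (M : Type) [CommGroup M] (c : ℕ) (hc : 1 ≤ c)

lemma shiftStab_top_char (k : ℤ) :
    theta M c hc ^ k ∈ shiftStab (lowZero M c (c - 1)) ↔ ∀ g : M, g ^ k = 1 := by
  constructor
  · intro hθ g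
    set m : ↥(trunc M c) := ⟨fun i => if i = 0 then g else 1, by
      intro i hi
      have : i ≠ 0 := by omega
      simp [this]⟩ with hm
    have h1 := hθ m 1 (by omega)
    have hdiv : ((theta M c hc ^ k) m / m : ↥(trunc M c)).1 1
        = ((theta M c hc ^ k) m : ↥(trunc M c)).1 1 / m.1 1 := rfl
    rw [hdiv, theta_zpow_coe_one] at h1
    have hm1 : m.1 1 = 1 := by simp [hm]
    have hm0 : m.1 0 = g := by simp [hm]
    rw [hm1, hm0, one_mul, div_one] at h1
    exact h1
  · intro hall m i hi
    have h2 : i < 2 := by omega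
    have hdiv : ((theta M c hc ^ k) m / m : ↥(trunc M c)).1 i
        = ((theta M c hc ^ k) m : ↥(trunc M c)).1 i / m.1 i := rfl
    interval_cases i
    · rw [hdiv, theta_zpow_coe_zero, div_self']
    · rw [hdiv, theta_zpow_coe_one, hall (m.1 0), mul_one, div_self']

lemma forall_zpow_iff (k : ℤ) :
    (∀ g : M, g ^ k = 1) ↔ ((Monoid.exponent M : ℤ) ∣ k) := by
  constructor
  · intro hall
    have hnat : ∀ g : M, g ^ (k.natAbs) = 1 := by
      intro g
      rcases Int.natAbs_eq k with h | h
      · have := hall g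
        rw [h, zpow_natCast] at this
        exact this
      · have := hall g
        rw [h, zpow_neg, inv_eq_one, zpow_natCast] at this
        exact this
    have hdvd := Monoid.exponent_dvd_of_forall_pow_eq_one hnat
    have : (Monoid.exponent M : ℤ) ∣ (k.natAbs : ℤ) := Int.natCast_dvd_natCast.mpr hdvd
    exact this.trans (Int.natAbs_dvd.mpr dvd_rfl)
  · rintro ⟨t, rfl⟩ g
    rw [zpow_mul, zpow_natCast, Monoid.pow_exponent_eq_one, one_zpow]

/-- The projection homomorphism onto `M × ZMod (exp M)`. -/
noncomputable def PhiHom : Egrp M c hc →* M × Multiplicative (ZMod (Monoid.exponent M)) where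
  toFun x := (x.left.1 0,
    Multiplicative.ofAdd ((Multiplicative.toAdd x.right : ℤ) : ZMod (Monoid.exponent M)))
  map_one' := by
    have h1 : ((1 : Egrp M c hc).left.1) 0 = 1 := rfl
    have h2 : Multiplicative.toAdd (1 : Egrp M c hc).right = 0 := rfl
    simp [h1, h2]
  map_mul' x y := by
    have hleft : ((x * y).left : ℕ → M) 0
        = (x.left : ℕ → M) 0 * ((phiAct M c hc x.right y.left : ↥(trunc M c)) : ℕ → M) 0 := rfl
    have hco : ((phiAct M c hc x.right y.left : ↥(trunc M c)) : ℕ → M) 0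
        = (y.left : ℕ → M) 0 := by
      rw [phiAct_apply]
      exact theta_zpow_coe_zero M c hc _ y.left
    have hright : Multiplicative.toAdd (x * y).right
        = Multiplicative.toAdd x.right + Multiplicative.toAdd y.right := rfl
    ext
    · simp [hleft, hco]
    · simp only [hright]
      simp [Int.cast_add, ofAdd_add]

lemma phiHom_surjective : Function.Surjective (PhiHom M c hc) := by
  rintro ⟨g, u⟩
  obtain ⟨k, hk⟩ := ZMod.intCast_surjective (Multiplicative.toAdd u)
  have hmem : (fun i => if i = 0 then g else 1) ∈ trunc M c := by
    intro i hi
    have : i ≠ 0 := by omega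
    simp [this]
  refine ⟨⟨⟨fun i => if i = 0 then g else 1, hmem⟩, Multiplicative.ofAdd k⟩, ?_⟩
  have hval : PhiHom M c hc ⟨⟨fun i => if i = 0 then g else 1, hmem⟩, Multiplicative.ofAdd k⟩
      = (g, Multiplicative.ofAdd ((k : ℤ) : ZMod (Monoid.exponent M))) := by
    simp [PhiHom]
  rw [hval, hk]
  simp

lemma ker_phiHom : (PhiHom M c hc).ker = Sgrp M c hc c := by
  ext x
  rw [MonoidHom.mem_ker, mem_Sgrp_iff, Prod.ext_iff]
  constructor
  · rintro ⟨h1, h2⟩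
    constructor
    · rw [mem_lowZero_c]
      exact h1
    · rw [shiftStab_top_char, forall_zpow_iff]
      have : ((Multiplicative.toAdd x.right : ℤ) : ZMod (Monoid.exponent M)) = 0 := by
        have := h2
        simpa [PhiHom] using this
      exact (ZMod.intCast_zmod_eq_zero_iff_dvd _ _).mp this
  · rintro ⟨h1, h2⟩
    rw [shiftStab_top_char, forall_zpow_iff] at h2
    constructor
    · exact (mem_lowZero_c M c).mp h1
    · show Multiplicative.ofAdd ((Multiplicative.toAdd x.right : ℤ) : ZMod (Monoid.exponent M))
        = 1
      rw [(ZMod.intCast_zmod_eq_zero_iff_dvd _ _).mpr h2]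
      rfl

end BEConstruction

/-- Key construction: `M × ZMod (exp M)` is `N_c`-capable for every abelian `M`. -/
theorem ncCapable_prod_exponent (M : Type) [CommGroup M] (c : ℕ) (hc : 1 ≤ c) :
    NcCapable c (M × Multiplicative (ZMod (Monoid.exponent M))) := by
  refine ⟨BEConstruction.Egrp M c hc, inferInstance, ⟨?_⟩⟩
  have hker : (BEConstruction.PhiHom M c hc).ker = Subgroup.upperCentralSeries _ c := by
    rw [BEConstruction.ker_phiHom, BEConstruction.ucs_eq M c hc c hc]
  exact ((QuotientGroup.quotientKerEquivOfSurjective _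
    (BEConstruction.phiHom_surjective M c hc)).symm).trans
    (QuotientGroup.quotientMulEquivOfEq hker)

open scoped commutatorElement

section PairingArgument

variable {E : Type} [Group E]

lemma comm_pow_left (hcen : ∀ u v : E, ⁅u, v⁆ ∈ Subgroup.center E) (x y : E) (n : ℕ) :
    ⁅x ^ n, y⁆ = ⁅x, y⁆ ^ n := by
  induction n with
  | zero => simp
  | succ n ih =>
    have hsplit : ⁅x ^ (n+1), y⁆ = x * ⁅x ^ n, y⁆ * x⁻¹ * ⁅x, y⁆ := by
      rw [pow_succ']
      group
    rw [hsplit, ih]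
    have hcpow : x * ⁅x, y⁆ ^ n * x⁻¹ = ⁅x, y⁆ ^ n := by
      have hcw := Subgroup.mem_center_iff.mp (Subgroup.pow_mem _ (hcen x y) n) x
      rw [hcw]
      group
    rw [show x * ⁅x, y⁆ ^ n * x⁻¹ * ⁅x, y⁆ = (x * ⁅x, y⁆ ^ n * x⁻¹) * ⁅x, y⁆ by group, hcpow,
      ← pow_succ]

lemma comm_pow_right (hcen : ∀ u v : E, ⁅u, v⁆ ∈ Subgroup.center E) (x y : E) (n : ℕ) :
    ⁅x, y ^ n⁆ = ⁅x, y⁆ ^ n := by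
  have h1 : ⁅x, y ^ n⁆ = ⁅y ^ n, x⁆⁻¹ := by group
  have h2 : ⁅x, y⁆ = ⁅y, x⁆⁻¹ := by group
  rw [h1, comm_pow_left hcen, h2, inv_pow]

end PairingArgument

/-- Baer-type necessity: if `G ≅ Mt × Z_d` is capable then `d` divides the exponent of `Mt`. -/
lemma dvd_exponent_of_capable {G : Type} [CommGroup G] {Mt : Type} [CommGroup Mt] {d : ℕ}
    (hcap : Capable G) (ψ : G ≃* Mt × Multiplicative (ZMod d)) :
    d ∣ Monoid.exponent Mt := by
  obtain ⟨E, iE, ⟨φ⟩⟩ := hcap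
  set e := Monoid.exponent Mt with he
  set z : G := ψ.symm (1, Multiplicative.ofAdd 1) with hz
  obtain ⟨x, hx⟩ := QuotientGroup.mk_surjective (φ z)
  have hqcomm : ∀ a b : E ⧸ Subgroup.center E, a * b = b * a := by
    intro a b
    apply φ.symm.injective
    rw [map_mul, map_mul, mul_comm]
  have hcen : ∀ u v : E, ⁅u, v⁆ ∈ Subgroup.center E := by
    intro u v
    have h1 : QuotientGroup.mk' (Subgroup.center E) ⁅u, v⁆ = 1 := by
      rw [map_commutatorElement]
      exact commutatorElement_eq_one_iff_commute.mpr (hqcomm _ _)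
    rwa [← MonoidHom.mem_ker, QuotientGroup.ker_mk'] at h1
  have hxe : x ^ e ∈ Subgroup.center E := by
    rw [Subgroup.mem_center_iff]
    intro y
    set g : G := φ.symm (QuotientGroup.mk y) with hg
    set a : ZMod d := Multiplicative.toAdd (ψ g).2 with ha
    obtain ⟨k, hk⟩ := ZMod.intCast_surjective ((e : ZMod d) * a)
    have hge : g ^ e = z ^ k := by
      apply ψ.injective
      rw [map_pow, map_zpow, hz, MulEquiv.apply_symm_apply]
      have h2 : (ψ g) ^ e = ((ψ g).1 ^ e, (ψ g).2 ^ e) := rfl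
      have h3 : ((1, Multiplicative.ofAdd (1 : ZMod d)) :
            Mt × Multiplicative (ZMod d)) ^ k
          = (1, Multiplicative.ofAdd (1 : ZMod d) ^ k) := by
        rw [Prod.pow_def]
        simp
      rw [h2, h3, Monoid.pow_exponent_eq_one]
      refine Prod.ext rfl ?_
      show (ψ g).2 ^ e = Multiplicative.ofAdd (1 : ZMod d) ^ k
      apply Multiplicative.toAdd.injective
      rw [toAdd_pow, toAdd_zpow, toAdd_ofAdd, zsmul_eq_mul, mul_one, ← ha, hk, nsmul_eq_mul]
    have hyx : (QuotientGroup.mk (y ^ e) : E ⧸ Subgroup.center E) = QuotientGroup.mk (x ^ k) := by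
      have hmk : (QuotientGroup.mk y : E ⧸ Subgroup.center E) = φ g := by
        rw [hg, MulEquiv.apply_symm_apply]
      have h4 : (QuotientGroup.mk (y ^ e) : E ⧸ Subgroup.center E)
          = (QuotientGroup.mk y : E ⧸ Subgroup.center E) ^ e := rfl
      have h5 : (QuotientGroup.mk (x ^ k) : E ⧸ Subgroup.center E)
          = (QuotientGroup.mk x : E ⧸ Subgroup.center E) ^ k := rfl
      rw [h4, h5, hmk, hx, ← map_pow, ← map_zpow, hge]
    have hw : (y ^ e)⁻¹ * x ^ k ∈ Subgroup.center E := QuotientGroup.eq.mp hyx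
    have hcom_xye : Commute x (y ^ e) := by
      have hyk : y ^ e = x ^ k * ((y ^ e)⁻¹ * x ^ k)⁻¹ := by group
      rw [hyk]
      exact Commute.mul_right (Commute.zpow_right (Commute.refl x) k)
        (Subgroup.mem_center_iff.mp (Subgroup.inv_mem _ hw) x)
    have hfinal : ⁅x ^ e, y⁆ = 1 := by
      rw [comm_pow_left hcen, ← comm_pow_right hcen]
      exact commutatorElement_eq_one_iff_commute.mpr hcom_xye
    exact ((commutatorElement_eq_one_iff_commute.mp hfinal).symm).eq
  have hze : z ^ e = 1 := by
    apply φ.injective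
    rw [map_pow, map_one, ← hx]
    have h6 : (QuotientGroup.mk x : E ⧸ Subgroup.center E) ^ e = QuotientGroup.mk (x ^ e) := rfl
    rw [h6]
    exact (QuotientGroup.eq_one_iff _).mpr hxe
  have h8 : (((1 : Mt), Multiplicative.ofAdd (1 : ZMod d)) :
      Mt × Multiplicative (ZMod d)) ^ e = 1 := by
    rw [← MulEquiv.apply_symm_apply ψ ((1 : Mt), Multiplicative.ofAdd (1 : ZMod d)), ← hz,
      ← map_pow, hze, map_one]
  have h9 : (Multiplicative.ofAdd (1 : ZMod d)) ^ e = 1 := congrArg Prod.snd h8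
  have h10 : ((e : ZMod d)) = 0 := by
    have h11 := congrArg Multiplicative.toAdd h9
    rwa [toAdd_pow, toAdd_ofAdd, nsmul_eq_mul, mul_one, toAdd_one] at h11
  exact (ZMod.natCast_eq_zero_iff e d).mp h10

section Splitting

open scoped DirectSum

/-- package an additive equivalence into a multiplicative one with a product target. -/
def mulequivOfAddequiv {G : Type} [CommGroup G] {A B : Type} [AddCommGroup A] [AddCommGroup B]
    (h : Additive G ≃+ A × B) : G ≃* Multiplicative A × Multiplicative B :=
  (MulEquiv.multiplicativeAdditive G).symm.trans
    ((AddEquiv.toMultiplicative h).trans (MulEquiv.prodMultiplicative A B))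

/-- Any finitely generated abelian group splits as `Mt × ZMod d` with `exp Mt ∣ d`. -/
lemma exists_splitting (G : Type) [CommGroup G] (hfg : Group.FG G) :
    ∃ (Mt : Type) (_ : CommGroup Mt) (d : ℕ), (∀ m : Mt, m ^ d = 1) ∧
      Nonempty (G ≃* Mt × Multiplicative (ZMod d)) := by
  classical
  haveI := hfg
  haveI : AddGroup.FG (Additive G) := AddGroup.fg_of_group_fg
  obtain ⟨n, ι, fι, p, hp, e, ⟨f⟩⟩ := AddCommGroup.equiv_free_prod_directSum_zmod (Additive G)
  -- direct sum to pi
  let piE : (⨁ i : ι, ZMod (p i ^ e i)) ≃+ (∀ i : ι, ZMod (p i ^ e i)) :=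
    { DFinsupp.equivFunOnFintype with
      map_add' := fun a b => funext fun i => DFinsupp.add_apply a b i }
  cases n with
  | succ n' =>
    -- infinite case : d = 0
    let e1 : (Fin (n' + 1) →₀ ℤ) ≃+ (Fin (n' + 1) → ℤ) :=
      { Finsupp.equivFunOnFinite with map_add' := fun a b => rfl }
    let e2 : (Fin (n' + 1) → ℤ) ≃+ ℤ × (Fin n' → ℤ) :=
      { (Fin.consEquiv (fun _ : Fin (n' + 1) => ℤ)).symm with map_add' := fun a b => rfl }
    let bigAdd : Additive G ≃+
        ((Fin n' → ℤ) × (⨁ i : ι, ZMod (p i ^ e i))) × ℤ :=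
      f.trans ((AddEquiv.prodCongr (e1.trans e2) (AddEquiv.refl _)).trans
        (AddEquiv.prodAssoc.trans AddEquiv.prodComm))
    refine ⟨Multiplicative ((Fin n' → ℤ) × (⨁ i : ι, ZMod (p i ^ e i))), inferInstance, 0,
      fun m => pow_zero m, ⟨?_⟩⟩
    have hzmod : (ℤ ≃+ ZMod 0) := AddEquiv.refl ℤ
    exact (mulequivOfAddequiv (bigAdd.trans
      (AddEquiv.prodCongr (AddEquiv.refl _) hzmod)))
  | zero =>
    -- finite case
    have hsub : ∀ x : (Fin 0 →₀ ℤ), x = 0 := by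
      intro x
      ext a
      exact a.elim0
    let e0 : ((Fin 0 →₀ ℤ) × (⨁ i : ι, ZMod (p i ^ e i))) ≃+ (⨁ i : ι, ZMod (p i ^ e i)) :=
      { toFun := fun x => x.2
        invFun := fun y => (0, y)
        left_inv := fun x => by
          rcases x with ⟨x1, x2⟩
          rw [hsub x1]
        right_inv := fun y => rfl
        map_add' := fun a b => rfl }
    let q : ι → ℕ := fun i => p i ^ e i
    -- select a maximizing index for each prime
    have hsel : ∀ r ∈ Finset.image p Finset.univ, ∃ i : ι, p i = r ∧
        ∀ j : ι, p j = r → e j ≤ e i := by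
      intro r hr
      obtain ⟨i0, _, hi0⟩ := Finset.mem_image.mp hr
      obtain ⟨b, hb, hmax⟩ := Finset.exists_max_image
        (Finset.univ.filter (fun j => p j = r)) e
        ⟨i0, Finset.mem_filter.mpr ⟨Finset.mem_univ _, hi0⟩⟩
      exact ⟨b, (Finset.mem_filter.mp hb).2,
        fun j hj => hmax j (Finset.mem_filter.mpr ⟨Finset.mem_univ _, hj⟩)⟩
    choose sel hsel1 hsel2 using hsel
    let s : Finset ι := (Finset.image p Finset.univ).attach.image (fun r => sel r.1 r.2)
    have hps : ∀ i ∈ s, ∀ j ∈ s, i ≠ j → p i ≠ p j := by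
      intro i hi j hj hne hpeq
      apply hne
      obtain ⟨r1, hr1, hi1⟩ := Finset.mem_image.mp hi
      obtain ⟨r2, hr2, hj1⟩ := Finset.mem_image.mp hj
      have h1 : p i = r1.1 := hi1 ▸ hsel1 r1.1 r1.2
      have h2 : p j = r2.1 := hj1 ▸ hsel1 r2.1 r2.2
      have : r1.1 = r2.1 := by rw [← h1, ← h2, hpeq]
      have : r1 = r2 := Subtype.ext this
      rw [← hi1, ← hj1, this]
    set d : ℕ := ∏ i ∈ s, q i with hd
    have hqdvd : ∀ i : ι, q i ∣ d := by
      intro i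
      have hrmem : p i ∈ Finset.image p Finset.univ :=
        Finset.mem_image.mpr ⟨i, Finset.mem_univ _, rfl⟩
      set j := sel (p i) hrmem with hj
      have hjs : j ∈ s := Finset.mem_image.mpr ⟨⟨p i, hrmem⟩, Finset.mem_attach _ _, rfl⟩
      have hpj : p j = p i := hsel1 _ _
      have hle : e i ≤ e j := hsel2 _ _ i rfl
      have h1 : q i ∣ q j := by
        show p i ^ e i ∣ p j ^ e j
        rw [hpj]
        exact pow_dvd_pow _ hle
      exact h1.trans (Finset.dvd_prod_of_mem q hjs)
    -- coprimality on s
    have hcop : Pairwise (Function.onFun Nat.Coprime (fun i : {x // x ∈ s} => q i.1)) := by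
      intro i j hij
      have hne : i.1 ≠ j.1 := fun h => hij (Subtype.ext h)
      have hpne : p i.1 ≠ p j.1 := hps i.1 i.2 j.1 j.2 hne
      show Nat.Coprime (p i.1 ^ e i.1) (p j.1 ^ e j.1)
      exact Nat.Coprime.pow _ _ ((Nat.coprime_primes (hp _) (hp _)).mpr hpne)
    -- CRT
    have hprod : ∏ i : {x // x ∈ s}, q i.1 = d := Finset.prod_coe_sort s q
    let crt : ZMod d ≃+ ∀ i : {x // x ∈ s}, ZMod (q i.1) :=
      (hprod ▸ (ZMod.prodEquivPi (fun i : {x // x ∈ s} => q i.1) hcop).toAddEquiv)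
    -- split pi into s-part and complement
    let split : (∀ i : ι, ZMod (q i)) ≃+
        (∀ i : {x // x ∈ s}, ZMod (q i.1)) × (∀ i : {x // x ∉ s}, ZMod (q i.1)) :=
      { Equiv.piEquivPiSubtypeProd (fun i => i ∈ s) (fun i => ZMod (q i)) with
        map_add' := fun a b => rfl }
    let bigAdd : Additive G ≃+ (∀ i : {x // x ∉ s}, ZMod (q i.1)) × ZMod d :=
      f.trans (e0.trans (piE.trans (split.trans
        ((AddEquiv.prodCongr crt.symm (AddEquiv.refl _)).trans AddEquiv.prodComm))))
    refine ⟨Multiplicative (∀ i : {x // x ∉ s}, ZMod (q i.1)), inferInstance, d, ?_, ⟨?_⟩⟩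
    · intro m
      apply Multiplicative.toAdd.injective
      rw [toAdd_pow, toAdd_one]
      funext i
      have h0 : (d : ZMod (q i.1)) = 0 := (ZMod.natCast_eq_zero_iff _ _).mpr (hqdvd i.1)
      show d • (Multiplicative.toAdd m) i = 0
      rw [nsmul_eq_mul, h0, zero_mul]
    · exact mulequivOfAddequiv bigAdd

end Splitting


/-- **Burns–Ellis.** A finitely generated abelian group is `N_c`-capable (for `c ≥ 1`)
if and only if it is capable. -/
theorem ncCapable_iff_capable (c : ℕ) (hc : 1 ≤ c) (G : Type) [CommGroup G]
    (hfg : Group.FG G) :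
    NcCapable c G ↔ Capable G := by
  constructor
  · exact capable_of_ncCapable hc
  · intro hcap
    obtain ⟨Mt, iMt, d, h1, ⟨ψ⟩⟩ := exists_splitting G hfg
    have hdvd : d ∣ Monoid.exponent Mt := dvd_exponent_of_capable hcap ψ
    have hdvd2 : Monoid.exponent Mt ∣ d := Monoid.exponent_dvd_of_forall_pow_eq_one h1
    have hde : Monoid.exponent Mt = d := Nat.dvd_antisymm hdvd2 hdvd
    have hnc := ncCapable_prod_exponent Mt c hc
    rw [hde] at hnc
    exact ncCapable_of_mulEquiv ψ hnc
end

section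
/- Let G be a group isomorphic to ℤ^(m) ⊕ ℤ_{n_1} ⊕ … ⊕ ℤ_{n_k}, where each n_i ≥ 2 and n_{i+1} divides n_i for all 1 ≤ i ≤ k−1, and let H be a finite subgroup of G. Then H is isomorphic to ℤ_{m_1} ⊕ … ⊕ ℤ_{m_k} for some positive integers m_1, …, m_k with m_{i+1} dividing m_i for all 1 ≤ i ≤ k−1 and m_i dividing n_i for all 1 ≤ i ≤ k. -/
open Finset

section Counting

variable {X Y : Type*} [AddCommGroup X] [AddCommGroup Y]

private def nsmulHom (X : Type*) [AddCommGroup X] (c : ℕ) : X →+ X where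
  toFun x := c • x
  map_zero' := smul_zero c
  map_add' x y := smul_add c x y

private lemma card_range_mul_card_ker [Finite X] (f : X →+ Y) :
    Nat.card (Set.range f) * Nat.card {x : X // f x = 0} = Nat.card X := by
  have e1 : Nat.card (Set.range f) = Nat.card (X ⧸ f.ker) :=
    Nat.card_congr ((Equiv.setCongr f.coe_range).symm.trans
      (QuotientAddGroup.quotientKerEquivRange f).toEquiv.symm)
  have e2 : Nat.card {x : X // f x = 0} = Nat.card f.ker :=
    Nat.card_congr (Equiv.subtypeEquivRight fun x => (f.mem_ker).symm)
  rw [e1, e2]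
  exact (AddSubgroup.card_eq_card_quotient_mul_card_addSubgroup f.ker).symm

/-- The set `p^t • (ker p^(t+1))`. -/
private def Sset (X : Type*) [AddCommGroup X] (p t : ℕ) : Set X :=
  (fun x : X => p ^ t • x) '' {x : X | p ^ (t + 1) • x = 0}

private lemma sset_card_mul (X : Type*) [AddCommGroup X] [Finite X] (p t : ℕ) :
    Nat.card (Sset X p t) * Nat.card {x : X // p ^ t • x = 0}
      = Nat.card {x : X // p ^ (t + 1) • x = 0} := by
  classical
  set K := (nsmulHom X (p ^ (t + 1))).ker with hK
  have hsub : ∀ x : X, p ^ t • x = 0 → p ^ (t + 1) • x = 0 := by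
    intro x hx
    have h : p ^ (t + 1) • x = p • p ^ t • x := by
      rw [← mul_smul, ← pow_succ']
    rw [h, hx, smul_zero]
  set g : K →+ X := (nsmulHom X (p ^ t)).comp K.subtype with hg
  have h := card_range_mul_card_ker g
  have h1 : Nat.card (Set.range g) = Nat.card (Sset X p t) := by
    refine Nat.card_congr (Equiv.setCongr ?_)
    ext y
    constructor
    · rintro ⟨⟨x, hx⟩, rfl⟩
      exact ⟨x, hx, rfl⟩
    · rintro ⟨x, hx, rfl⟩
      exact ⟨⟨x, hx⟩, rfl⟩
  have h2 : Nat.card {x : K // g x = 0} = Nat.card {x : X // p ^ t • x = 0} := by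
    refine Nat.card_congr ?_
    refine ⟨fun x => ⟨x.1.1, x.2⟩, fun y => ⟨⟨y.1, hsub y.1 y.2⟩, y.2⟩, ?_, ?_⟩
    · rintro ⟨⟨x, hx⟩, h⟩; rfl
    · rintro ⟨y, hy⟩; rfl
  have h3 : Nat.card K = Nat.card {x : X // p ^ (t + 1) • x = 0} := by
    exact Nat.card_congr (Equiv.subtypeEquivRight fun x => Iff.rfl)
  rw [h1, h2, h3] at h
  exact h

private lemma card_kset_zmod (q s : ℕ) (hq : q ≠ 0) :
    Nat.card {x : ZMod q // s • x = 0} = Nat.gcd q s := by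
  haveI : NeZero q := ⟨hq⟩
  set f : ZMod q →+ ZMod q := AddMonoidHom.mulLeft (s : ZMod q) with hf
  have h := card_range_mul_card_ker f
  have hrange : Set.range f = (AddSubgroup.zmultiples (s : ZMod q) : Set (ZMod q)) := by
    ext y
    constructor
    · rintro ⟨x, rfl⟩
      refine AddSubgroup.mem_zmultiples_iff.mpr ⟨(x.val : ℤ), ?_⟩
      show (x.val : ℤ) • (s : ZMod q) = (s : ZMod q) * x
      rw [zsmul_eq_mul]
      push_cast
      rw [ZMod.natCast_val, ZMod.cast_id, mul_comm]
    · intro hy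
      obtain ⟨k, hk⟩ := AddSubgroup.mem_zmultiples_iff.mp hy
      refine ⟨(k : ZMod q), ?_⟩
      show (s : ZMod q) * (k : ZMod q) = y
      rw [← hk, zsmul_eq_mul, mul_comm]
  have h5 : Nat.card (Set.range ⇑f) = q / Nat.gcd q s := by
    rw [hrange]
    show Nat.card (AddSubgroup.zmultiples (s : ZMod q)) = _
    rw [Nat.card_zmultiples, ZMod.addOrderOf_coe s hq]
  have hker : Nat.card {x : ZMod q // f x = 0} = Nat.card {x : ZMod q // s • x = 0} := by
    refine Nat.card_congr (Equiv.subtypeEquivRight fun x => ?_)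
    show (s : ZMod q) * x = 0 ↔ s • x = 0
    rw [nsmul_eq_mul]
  rw [h5, hker, Nat.card_zmod] at h
  have hg : Nat.gcd q s ∣ q := Nat.gcd_dvd_left q s
  have hpos : 0 < q / Nat.gcd q s :=
    Nat.div_pos (Nat.le_of_dvd (Nat.pos_of_ne_zero hq) hg)
      (Nat.gcd_pos_of_pos_left s (Nat.pos_of_ne_zero hq))
  refine Nat.eq_of_mul_eq_mul_left hpos ?_
  rw [h, Nat.div_mul_cancel hg]

private lemma gcd_prime_pow {p : ℕ} (hp : p.Prime) {q : ℕ} (hq : q ≠ 0) (s : ℕ) :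
    Nat.gcd q (p ^ s) = p ^ min (q.factorization p) s := by
  obtain ⟨c, hcs, hc⟩ := (Nat.dvd_prime_pow hp).mp (Nat.gcd_dvd_right q (p ^ s))
  refine Nat.dvd_antisymm ?_ ?_
  · rw [hc]
    refine pow_dvd_pow p (le_min ?_ hcs)
    exact (hp.pow_dvd_iff_le_factorization hq).mp (hc ▸ Nat.gcd_dvd_left q (p ^ s))
  · refine Nat.dvd_gcd ?_ (pow_dvd_pow p (min_le_right _ _))
    exact (hp.pow_dvd_iff_le_factorization hq).mpr (min_le_left _ _)

private lemma card_kset_pi {ι : Type} [Fintype ι] (q : ι → ℕ) (s : ℕ) :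
    Nat.card {x : (∀ i, ZMod (q i)) // s • x = 0}
      = ∏ i, Nat.card {y : ZMod (q i) // s • y = 0} := by
  rw [← Nat.card_pi]
  refine Nat.card_congr ?_
  refine ⟨fun x i => ⟨x.1 i, congrFun x.2 i⟩,
    fun y => ⟨fun i => (y i).1, funext fun i => (y i).2⟩, ?_, ?_⟩
  · rintro ⟨x, hx⟩; rfl
  · intro y; rfl

private lemma card_sset_pi {ι : Type} [Fintype ι] (q : ι → ℕ) (hq : ∀ i, q i ≠ 0)
    {p : ℕ} (hp : p.Prime) (t : ℕ) :
    Nat.card (Sset (∀ i, ZMod (q i)) p t)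
      = p ^ (univ.filter fun i => p ^ (t + 1) ∣ q i).card := by
  classical
  haveI : ∀ i, NeZero (q i) := fun i => ⟨hq i⟩
  have hK : ∀ s : ℕ, Nat.card {x : (∀ i, ZMod (q i)) // p ^ s • x = 0}
      = p ^ ∑ i, min ((q i).factorization p) s := by
    intro s
    rw [card_kset_pi]
    rw [← Finset.prod_pow_eq_pow_sum]
    refine Finset.prod_congr rfl fun i _ => ?_
    rw [card_kset_zmod _ _ (hq i), gcd_prime_pow hp (hq i)]
  have hmul := sset_card_mul (∀ i, ZMod (q i)) p t
  rw [hK t, hK (t + 1)] at hmul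
  have hsum : ∑ i, min ((q i).factorization p) (t + 1)
      = (∑ i, min ((q i).factorization p) t)
        + (univ.filter fun i => p ^ (t + 1) ∣ q i).card := by
    have key : ∀ i : ι, min ((q i).factorization p) (t + 1)
        = min ((q i).factorization p) t + (if p ^ (t + 1) ∣ q i then 1 else 0) := by
      intro i
      have hiff : p ^ (t + 1) ∣ q i ↔ t + 1 ≤ (q i).factorization p :=
        hp.pow_dvd_iff_le_factorization (hq i)
      by_cases h : p ^ (t + 1) ∣ q i
      · rw [if_pos h]
        have := hiff.mp h
        omega
      · rw [if_neg h]
        have : ¬ (t + 1 ≤ (q i).factorization p) := fun hc => h (hiff.mpr hc)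
        omega
    rw [Finset.sum_congr rfl fun i _ => key i, Finset.sum_add_distrib]
    congr 1
    simp [Finset.sum_boole]
  rw [hsum, pow_add] at hmul
  have hppos : 0 < p ^ ∑ i, min ((q i).factorization p) t := pow_pos hp.pos _
  have hmul' : Nat.card (Sset (∀ i, ZMod (q i)) p t)
      * p ^ ∑ i, min ((q i).factorization p) t
      = p ^ (univ.filter fun i => p ^ (t + 1) ∣ q i).card
      * p ^ ∑ i, min ((q i).factorization p) t := by
    rw [hmul]; ring
  exact Nat.eq_of_mul_eq_mul_right hppos hmul'

private lemma sset_card_eq_of_addEquiv {X Y : Type*} [AddCommGroup X] [AddCommGroup Y]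
    (φ : X ≃+ Y) (p t : ℕ) : Nat.card (Sset X p t) = Nat.card (Sset Y p t) := by
  have himg : Sset Y p t = (φ : X → Y) '' Sset X p t := by
    ext y
    constructor
    · rintro ⟨x, hx, rfl⟩
      refine ⟨p ^ t • φ.symm x, ⟨φ.symm x, ?_, rfl⟩, ?_⟩
      · show p ^ (t + 1) • φ.symm x = 0
        rw [← map_nsmul, hx, map_zero]
      · rw [map_nsmul, φ.apply_symm_apply]
    · rintro ⟨z, ⟨x, hx, rfl⟩, rfl⟩
      refine ⟨φ x, ?_, ?_⟩
      · show p ^ (t + 1) • φ x = 0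
        rw [← map_nsmul, hx, map_zero]
      · rw [map_nsmul]
  rw [himg]
  exact Nat.card_congr (Equiv.Set.image _ _ φ.injective)

private lemma sset_card_le_of_inj {X Y : Type*} [AddCommGroup X] [AddCommGroup Y] [Finite Y]
    (f : X →+ Y) (hf : Function.Injective f) (p t : ℕ) :
    Nat.card (Sset X p t) ≤ Nat.card (Sset Y p t) := by
  have hmap : ∀ x : X, x ∈ Sset X p t → f x ∈ Sset Y p t := by
    rintro _ ⟨x, hx, rfl⟩
    refine ⟨f x, ?_, by rw [map_nsmul]⟩
    show p ^ (t + 1) • f x = 0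
    rw [← map_nsmul, hx, map_zero]
  refine Nat.card_le_card_of_injective (fun x : Sset X p t => (⟨f x.1, hmap x.1 x.2⟩ : Sset Y p t)) ?_
  rintro ⟨x, hx⟩ ⟨y, hy⟩ h
  exact Subtype.ext (hf (congrArg Subtype.val h))

/-- The key counting inequality. -/
private lemma count_le {k : ℕ} (n : Fin k → ℕ) (hn : ∀ i, n i ≠ 0)
    {A : Type*} [AddCommGroup A] [Finite A]
    (f : A →+ ∀ i, ZMod (n i)) (hf : Function.Injective f)
    {ι : Type} [Fintype ι] (pj ej : ι → ℕ) (hpj : ∀ j, (pj j).Prime)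
    (φ : A ≃+ ∀ j, ZMod (pj j ^ ej j)) {p : ℕ} (hpp : p.Prime) (t : ℕ) :
    (univ.filter fun j : ι => p ^ (t + 1) ∣ pj j ^ ej j).card ≤
      (univ.filter fun i : Fin k => p ^ (t + 1) ∣ n i).card := by
  haveI : ∀ i, NeZero (n i) := fun i => ⟨hn i⟩
  have key : (p : ℕ) ^ (univ.filter fun j : ι => p ^ (t + 1) ∣ pj j ^ ej j).card
      ≤ p ^ (univ.filter fun i : Fin k => p ^ (t + 1) ∣ n i).card := by
    calc p ^ (univ.filter fun j : ι => p ^ (t + 1) ∣ pj j ^ ej j).card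
        = Nat.card (Sset (∀ j, ZMod (pj j ^ ej j)) p t) :=
          (card_sset_pi _ (fun j => pow_ne_zero _ (hpj j).pos.ne') hpp t).symm
      _ = Nat.card (Sset A p t) := (sset_card_eq_of_addEquiv φ p t).symm
      _ ≤ Nat.card (Sset (∀ i, ZMod (n i)) p t) := sset_card_le_of_inj f hf p t
      _ = p ^ (univ.filter fun i : Fin k => p ^ (t + 1) ∣ n i).card :=
          card_sset_pi _ hn hpp t
  exact (Nat.pow_le_pow_iff_right hpp.one_lt).mp key
end Counting

open Finset

section Plumbing

private def piSumAddEquiv {α β : Type*} (γ : α ⊕ β → Type*) [∀ s, AddMonoid (γ s)] :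
    (∀ s, γ s) ≃+ (∀ a, γ (Sum.inl a)) × (∀ b, γ (Sum.inr b)) :=
  { Equiv.sumPiEquivProdPi γ with map_add' := fun _ _ => rfl }

private def piCurryAddEquiv {α : Type*} {β : α → Type*} (γ : ∀ a, β a → Type*)
    [∀ a b, AddMonoid (γ a b)] : (∀ s : Σ a, β a, γ s.1 s.2) ≃+ ∀ a b, γ a b :=
  { Equiv.piCurry γ with map_add' := fun _ _ => rfl }

private def piCommAddEquiv {α β : Type*} (γ : α → β → Type*) [∀ a b, AddMonoid (γ a b)] :
    (∀ a b, γ a b) ≃+ ∀ b a, γ a b :=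
  { Equiv.piComm γ with map_add' := fun _ _ => rfl }

private def consAddEquiv {N : ℕ} (α : Fin (N + 1) → Type*) [∀ i, AddMonoid (α i)] :
    (α 0 × ∀ i : Fin N, α i.succ) ≃+ ∀ i, α i :=
  { Fin.consEquiv α with
    map_add' := fun x y => by
      funext i
      refine Fin.cases ?_ ?_ i <;> simp [Fin.consEquiv] }

private lemma filter_card_equiv {α β : Type*} [Fintype α] [Fintype β] [DecidableEq β]
    (e : α ≃ β) (P : β → Prop) [DecidablePred P] :
    (univ.filter fun a => P (e a)).card = (univ.filter P).card := by
  have himg : (univ.filter fun a => P (e a)).image e = univ.filter P := by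
    ext b
    simp only [mem_image, mem_filter, mem_univ, true_and]
    constructor
    · rintro ⟨a, ha, rfl⟩; exact ha
    · intro hb; exact ⟨e.symm b, by simpa using hb, e.apply_symm_apply b⟩
  rw [← himg, Finset.card_image_of_injective _ e.injective]

end Plumbing

section CRT

private lemma zmod_pi_equiv_fin : ∀ (N : ℕ) (a : Fin N → ℕ),
    (∀ i j, i ≠ j → Nat.Coprime (a i) (a j)) →
    Nonempty (ZMod (∏ i, a i) ≃+ ∀ i, ZMod (a i)) := by
  intro N
  induction N with
  | zero =>
    intro a _
    haveI : Unique (ZMod 1) := inferInstanceAs (Unique (Fin 1))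
    exact ⟨(ZMod.ringEquivCongr (show (∏ i : Fin 0, a i) = 1 by simp)).toAddEquiv.trans
      AddEquiv.ofUnique⟩
  | succ N ih =>
    intro a h
    obtain ⟨e⟩ := ih (fun i => a i.succ)
      (fun i j hij => h _ _ (fun hc => hij (Fin.succ_injective N hc)))
    have h1 : ∏ i, a i = a 0 * ∏ i : Fin N, a i.succ := Fin.prod_univ_succ a
    have hcop : Nat.Coprime (a 0) (∏ i : Fin N, a i.succ) :=
      Nat.Coprime.prod_right fun i _ => h 0 i.succ (Fin.succ_ne_zero i).symm
    exact ⟨(ZMod.ringEquivCongr h1).toAddEquiv.trans <|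
      (ZMod.chineseRemainder hcop).toAddEquiv.trans <|
      (AddEquiv.prodCongr (AddEquiv.refl _) e).trans (consAddEquiv (fun i => ZMod (a i)))⟩

private lemma zmod_pi_equiv {ι : Type} [Fintype ι] (a : ι → ℕ)
    (h : ∀ i j, i ≠ j → Nat.Coprime (a i) (a j)) :
    Nonempty (ZMod (∏ i, a i) ≃+ ∀ i, ZMod (a i)) := by
  classical
  let c := (Fintype.equivFin ι).symm
  obtain ⟨e⟩ := zmod_pi_equiv_fin (Fintype.card ι) (a ∘ c)
    (fun i j hij => h _ _ (fun hc => hij (c.injective hc)))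
  refine ⟨(ZMod.ringEquivCongr ?_).toAddEquiv.trans
    (e.trans (RingEquiv.piCongrLeft (fun i => ZMod (a i)) c).toAddEquiv)⟩
  exact (Equiv.prod_comp c a).symm

private lemma prod_prime_pow_dvd {ι : Type} [Fintype ι] (q : ι → ℕ) (hq : ∀ x, (q x).Prime)
    (hinj : Function.Injective q) (F : ι → ℕ) (M : ℕ) (h : ∀ x, q x ^ F x ∣ M) :
    (∏ x, q x ^ F x) ∣ M := by
  classical
  have key : ∀ s : Finset ι, (∏ x ∈ s, q x ^ F x) ∣ M := by
    intro s
    induction s using Finset.induction_on with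
    | empty => simpa using one_dvd M
    | @insert a s ha ih =>
      rw [Finset.prod_insert ha]
      have hcop : Nat.Coprime (q a ^ F a) (∏ x ∈ s, q x ^ F x) :=
        Nat.Coprime.prod_right fun b hb =>
          Nat.Coprime.pow _ _ ((Nat.coprime_primes (hq a) (hq b)).mpr
            fun hab => ha (hinj hab ▸ hb))
      exact Nat.Coprime.mul_dvd_of_dvd_of_dvd hcop (h a) ih
  exact key univ

end CRT

section Sorting

private lemma exists_sorted_exponents (p k : ℕ) {ι : Type} [Fintype ι]
    (g : ι → ℕ) (hcard : Fintype.card ι ≤ k) :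
    ∃ u : Fin k → ℕ, Antitone u ∧
      (∀ t : ℕ, (univ.filter fun i : Fin k => t + 1 ≤ u i).card
        = (univ.filter fun j : ι => t + 1 ≤ g j).card) ∧
      Nonempty ((∀ i : Fin k, ZMod (p ^ u i)) ≃+ ∀ j : ι, ZMod (p ^ g j)) := by
  classical
  set N := Fintype.card ι with hN
  set c : Fin N ≃ ι := (Fintype.equivFin ι).symm with hc
  set σ : Equiv.Perm (Fin N) := Tuple.sort (g ∘ c) with hσ
  set w : Fin N → ℕ := (g ∘ c) ∘ σ with hw
  have hwmono : Monotone w := Tuple.monotone_sort (g ∘ c)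
  set u : Fin k → ℕ :=
    fun i => if h : (i : ℕ) < N then w ((⟨(i : ℕ), h⟩ : Fin N).rev) else 0 with hu
  have hui : ∀ (i : Fin k) (h : (i : ℕ) < N), u i = w ((⟨(i : ℕ), h⟩ : Fin N).rev) := by
    intro i h; simp only [hu]; rw [dif_pos h]
  have hui0 : ∀ (i : Fin k), ¬ (i : ℕ) < N → u i = 0 := by
    intro i h; simp only [hu]; rw [dif_neg h]
  have hanti : Antitone u := by
    intro i j hij
    by_cases hjN : (j : ℕ) < N
    · have hiN : (i : ℕ) < N := lt_of_le_of_lt hij hjN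
      rw [hui i hiN, hui j hjN]
      refine hwmono (Fin.rev_le_rev.mpr ?_)
      exact hij
    · rw [hui0 j hjN]
      exact Nat.zero_le _
  have hcount : ∀ t : ℕ, (univ.filter fun i : Fin k => t + 1 ≤ u i).card
      = (univ.filter fun j : ι => t + 1 ≤ g j).card := by
    intro t
    have s1 : (univ.filter fun i : Fin k => t + 1 ≤ u i).card
        = (univ.filter fun x : Fin N => t + 1 ≤ w x).card := by
      set m : Fin N → Fin k :=
        fun x => ⟨(x.rev : ℕ), lt_of_lt_of_le x.rev.isLt hcard⟩ with hm
      have hminj : Function.Injective m := by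
        intro x y hxy
        have h2 : ((m x : Fin k) : ℕ) = ((m y : Fin k) : ℕ) := congrArg Fin.val hxy
        exact Fin.rev_injective (Fin.ext h2)
      have hum : ∀ x : Fin N, u (m x) = w x := by
        intro x
        have hlt : ((m x : Fin k) : ℕ) < N := x.rev.isLt
        rw [hui (m x) hlt]
        have hval : (⟨((m x) : ℕ), hlt⟩ : Fin N) = x.rev := Fin.ext rfl
        rw [hval, Fin.rev_rev]
      have himg : univ.filter (fun i : Fin k => t + 1 ≤ u i)
          = (univ.filter fun x : Fin N => t + 1 ≤ w x).image m := by
        ext i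
        simp only [mem_filter, mem_univ, true_and, mem_image]
        constructor
        · intro hi
          have hiN : (i : ℕ) < N := by
            by_contra hcon
            rw [hui0 i hcon] at hi; omega
          refine ⟨(⟨(i : ℕ), hiN⟩ : Fin N).rev, ?_, ?_⟩
          · rw [hui i hiN] at hi
            exact hi
          · apply Fin.ext
            show ((((⟨(i : ℕ), hiN⟩ : Fin N).rev).rev : Fin N) : ℕ) = (i : ℕ)
            rw [Fin.rev_rev]
        · rintro ⟨x, hx, rfl⟩
          rw [hum]; exact hx
      rw [himg, Finset.card_image_of_injective _ hminj]
    rw [s1, hw]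
    exact (filter_card_equiv σ (fun y => t + 1 ≤ (g ∘ c) y)).trans
      (filter_card_equiv c (fun j => t + 1 ≤ g j))
  have hkN : N + (k - N) = k := Nat.add_sub_cancel' hcard
  let E : Fin N ⊕ Fin (k - N) ≃ Fin k := finSumFinEquiv.trans (finCongr hkN)
  have hEl : ∀ a : Fin N, ((E (Sum.inl a)) : ℕ) = (a : ℕ) := by
    intro a; simp [E]
  have hEr : ∀ b : Fin (k - N), ((E (Sum.inr b)) : ℕ) = N + (b : ℕ) := by
    intro b; simp [E]
  refine ⟨u, hanti, hcount, ⟨?_⟩⟩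
  have e1 : (∀ i : Fin k, ZMod (p ^ u i)) ≃+ ∀ s : Fin N ⊕ Fin (k - N), ZMod (p ^ u (E s)) :=
    (RingEquiv.piCongrLeft (fun i => ZMod (p ^ u i)) E).symm.toAddEquiv
  have e2 := piSumAddEquiv (fun s => ZMod (p ^ u (E s)))
  have hleft : ∀ a : Fin N, u (E (Sum.inl a)) = w a.rev := by
    intro a
    have h : ((E (Sum.inl a)) : ℕ) < N := by rw [hEl]; exact a.isLt
    rw [hui _ h]
    have hval : (⟨((E (Sum.inl a)) : ℕ), h⟩ : Fin N) = a := Fin.ext (hEl a)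
    rw [hval]
  have eL1 : (∀ a : Fin N, ZMod (p ^ u (E (Sum.inl a)))) ≃+ ∀ a : Fin N, ZMod (p ^ w a.rev) :=
    AddEquiv.piCongrRight fun a => (ZMod.ringEquivCongr (by rw [hleft a])).toAddEquiv
  have eL2 : (∀ a : Fin N, ZMod (p ^ w a.rev)) ≃+ ∀ a : Fin N, ZMod (p ^ w a) :=
    (RingEquiv.piCongrLeft (fun a => ZMod (p ^ w a)) (Fin.revPerm)).toAddEquiv
  have eL3 : (∀ a : Fin N, ZMod (p ^ w a)) ≃+ ∀ x : Fin N, ZMod (p ^ g (c x)) :=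
    (RingEquiv.piCongrLeft (fun x => ZMod (p ^ g (c x))) σ).toAddEquiv
  have eL4 : (∀ x : Fin N, ZMod (p ^ g (c x))) ≃+ ∀ j : ι, ZMod (p ^ g j) :=
    (RingEquiv.piCongrLeft (fun j => ZMod (p ^ g j)) c).toAddEquiv
  have hright : ∀ b : Fin (k - N), p ^ u (E (Sum.inr b)) = 1 := by
    intro b
    have h : ¬ ((E (Sum.inr b)) : ℕ) < N := by rw [hEr]; omega
    rw [hui0 _ h, pow_zero]
  have eR : (∀ b : Fin (k - N), ZMod (p ^ u (E (Sum.inr b)))) ≃+ ∀ b : Fin (k - N), ZMod 1 :=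
    AddEquiv.piCongrRight fun b => (ZMod.ringEquivCongr (hright b)).toAddEquiv
  haveI : Unique (ZMod 1) := inferInstanceAs (Unique (Fin 1))
  exact e1.trans <| e2.trans <|
    (AddEquiv.prodCongr (eL1.trans (eL2.trans (eL3.trans eL4))) eR).trans AddEquiv.prodUnique

end Sorting

section Main

private lemma chain_dvd {k : ℕ} (n : Fin k → ℕ)
    (hdvd : ∀ i : Fin k, ∀ h : (i : ℕ) + 1 < k, n ⟨(i : ℕ) + 1, h⟩ ∣ n i) :
    ∀ (d : ℕ) (i j : Fin k), (i : ℕ) + d = (j : ℕ) → n j ∣ n i := by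
  intro d
  induction d with
  | zero =>
    intro i j h
    have : i = j := Fin.ext (by omega)
    rw [this]
  | succ d ih =>
    intro i j h
    have hjk := j.isLt
    have hd' : (i : ℕ) + d < k := by omega
    have hj : (i : ℕ) + d + 1 < k := by omega
    have h1 : n j ∣ n ⟨(i : ℕ) + d, hd'⟩ := by
      have h2 := hdvd ⟨(i : ℕ) + d, hd'⟩ hj
      have h3 : (⟨(i : ℕ) + d + 1, hj⟩ : Fin k) = j := by
        apply Fin.ext
        show (i : ℕ) + d + 1 = (j : ℕ)
        omega
      rwa [h3] at h2
    exact h1.trans (ih i ⟨(i : ℕ) + d, hd'⟩ rfl)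

private lemma main_lemma {k : ℕ} (n : Fin k → ℕ) (hn0 : ∀ i, n i ≠ 0)
    (hchain : ∀ i j : Fin k, i ≤ j → n j ∣ n i)
    (A : Type) [AddCommGroup A] [Finite A]
    (f : A →+ ∀ i, ZMod (n i)) (hf : Function.Injective f) :
    ∃ mm : Fin k → ℕ, (∀ i, 1 ≤ mm i) ∧
      (∀ i j : Fin k, i ≤ j → mm j ∣ mm i) ∧
      (∀ i, mm i ∣ n i) ∧ Nonempty (A ≃+ ∀ i, ZMod (mm i)) := by
  classical
  obtain ⟨ι0, hι0, p0, hp0, e0, ⟨φ0⟩⟩ := AddCommGroup.equiv_directSum_zmod_of_finite A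
  set ι : Type := {j : ι0 // e0 j ≠ 0} with hι
  set pj : ι → ℕ := fun j => p0 j.1 with hpj
  set ej : ι → ℕ := fun j => e0 j.1 with hej
  have hpjprime : ∀ j : ι, (pj j).Prime := fun j => hp0 j.1
  have hej1 : ∀ j : ι, 1 ≤ ej j := fun j => Nat.one_le_iff_ne_zero.mpr j.2
  haveI : Unique (ZMod 1) := inferInstanceAs (Unique (Fin 1))
  have φ : A ≃+ ∀ j : ι, ZMod (pj j ^ ej j) := by
    refine φ0.trans ?_
    refine (DirectSum.addEquivProd _).trans ?_
    refine ((RingEquiv.piCongrLeft (fun j : ι0 => ZMod (p0 j ^ e0 j))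
      (Equiv.sumCompl (fun j : ι0 => e0 j ≠ 0))).symm.toAddEquiv).trans ?_
    refine (piSumAddEquiv _).trans ?_
    have hzero : ∀ b : {j : ι0 // ¬ e0 j ≠ 0},
        p0 ((Equiv.sumCompl fun j : ι0 => e0 j ≠ 0) (Sum.inr b)) ^
          e0 ((Equiv.sumCompl fun j : ι0 => e0 j ≠ 0) (Sum.inr b)) = 1 := by
      intro b
      have hb : e0 b.1 = 0 := not_not.mp b.2
      show p0 b.1 ^ e0 b.1 = 1
      rw [hb, pow_zero]
    have eR : (∀ b : {j : ι0 // ¬ e0 j ≠ 0},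
        ZMod (p0 ((Equiv.sumCompl fun j : ι0 => e0 j ≠ 0) (Sum.inr b)) ^
          e0 ((Equiv.sumCompl fun j : ι0 => e0 j ≠ 0) (Sum.inr b))))
          ≃+ ∀ _ : {j : ι0 // ¬ e0 j ≠ 0}, ZMod 1 :=
      AddEquiv.piCongrRight fun b => (ZMod.ringEquivCongr (hzero b)).toAddEquiv
    exact (AddEquiv.prodCongr (AddEquiv.refl _) eR).trans AddEquiv.prodUnique
  have hcount : ∀ (p : ℕ), p.Prime → ∀ t : ℕ,
      (univ.filter fun j : ι => p ^ (t + 1) ∣ pj j ^ ej j).card ≤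
      (univ.filter fun i : Fin k => p ^ (t + 1) ∣ n i).card :=
    fun p hp t => count_le n hn0 f hf pj ej hpjprime φ hp t
  set P : Finset ℕ := univ.image pj with hP
  have hPprime : ∀ y : {x // x ∈ P}, (y : ℕ).Prime := by
    rintro ⟨y, hy⟩
    obtain ⟨j, _, rfl⟩ := Finset.mem_image.mp hy
    exact hpjprime j
  set toP : ι → {x // x ∈ P} :=
    fun j => ⟨pj j, Finset.mem_image_of_mem pj (mem_univ j)⟩ with htoP
  have hfib : ∀ (y : {x // x ∈ P}) (t : ℕ),
      (univ.filter fun x : {j : ι // toP j = y} => t + 1 ≤ ej x.1).card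
        = (univ.filter fun j : ι => (y : ℕ) ^ (t + 1) ∣ pj j ^ ej j).card := by
    intro y t
    have hiff : ∀ j : ι, ((y : ℕ) ^ (t + 1) ∣ pj j ^ ej j) ↔ (toP j = y ∧ t + 1 ≤ ej j) := by
      intro j
      constructor
      · intro hdvd
        have hy := hPprime y
        have hpj' := hpjprime j
        have h1 : (y : ℕ) ∣ pj j ^ ej j :=
          dvd_trans (dvd_pow_self _ (Nat.succ_ne_zero t)) hdvd
        have h2 : (y : ℕ) ∣ pj j := hy.prime.dvd_of_dvd_pow h1
        have h3 : (y : ℕ) = pj j := (Nat.prime_dvd_prime_iff_eq hy hpj').mp h2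
        refine ⟨Subtype.ext h3.symm, ?_⟩
        rw [h3] at hdvd
        exact (Nat.pow_dvd_pow_iff_le_right hpj'.one_lt).mp hdvd
      · rintro ⟨hyy, hle⟩
        have h3 : (y : ℕ) = pj j := (congrArg Subtype.val hyy).symm
        rw [h3]
        exact pow_dvd_pow _ hle
    have hfilt : (univ.filter fun j : ι => (y : ℕ) ^ (t + 1) ∣ pj j ^ ej j)
        = (univ.filter fun j : ι => toP j = y ∧ t + 1 ≤ ej j) :=
      Finset.filter_congr fun j _ => hiff j
    rw [hfilt]
    refine Finset.card_bij (fun x _ => x.1) ?_ ?_ ?_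
    · rintro ⟨j, hj⟩ hx
      simp only [mem_filter, mem_univ, true_and] at hx ⊢
      exact ⟨hj, hx⟩
    · rintro ⟨j1, h1⟩ _ ⟨j2, h2⟩ _ hh
      exact Subtype.ext hh
    · intro j hj
      simp only [mem_filter, mem_univ, true_and] at hj
      exact ⟨⟨j, hj.1⟩, by simp [hj.2]; omega, rfl⟩
  have hfibcard : ∀ y : {x // x ∈ P}, Fintype.card {j : ι // toP j = y} ≤ k := by
    intro y
    have h0 : Fintype.card {j : ι // toP j = y}
        = (univ.filter fun x : {j : ι // toP j = y} => 0 + 1 ≤ ej x.1).card := by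
      have huniv : (univ.filter fun x : {j : ι // toP j = y} => 0 + 1 ≤ ej x.1) = univ :=
        Finset.filter_true_of_mem fun x _ => by simpa using hej1 x.1
      rw [huniv, Finset.card_univ]
    rw [h0, hfib y 0]
    calc (univ.filter fun j : ι => (y : ℕ) ^ (0 + 1) ∣ pj j ^ ej j).card
        ≤ (univ.filter fun i : Fin k => (y : ℕ) ^ (0 + 1) ∣ n i).card :=
          hcount (y : ℕ) (hPprime y) 0
      _ ≤ (univ : Finset (Fin k)).card := Finset.card_filter_le _ _
      _ = k := by simp
  have hexists := fun y : {x // x ∈ P} =>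
    exists_sorted_exponents (y : ℕ) k (fun x : {j : ι // toP j = y} => ej x.1) (hfibcard y)
  choose u hanti hcnt hequiv using hexists
  set mm : Fin k → ℕ := fun i => ∏ y : {x // x ∈ P}, (y : ℕ) ^ u y i with hmm
  refine ⟨mm, ?_, ?_, ?_, ?_⟩
  · intro i
    refine Nat.one_le_iff_ne_zero.mpr (Finset.prod_ne_zero_iff.mpr fun y _ => ?_)
    exact pow_ne_zero _ (hPprime y).pos.ne'
  · intro i j hij
    exact Finset.prod_dvd_prod_of_dvd _ _ fun y _ => pow_dvd_pow _ (hanti y hij)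
  · intro i
    refine prod_prime_pow_dvd (fun y : {x // x ∈ P} => (y : ℕ)) hPprime
      Subtype.coe_injective _ _ ?_
    intro y
    by_cases h0 : u y i = 0
    · rw [h0, pow_zero]; exact one_dvd _
    set t := u y i - 1 with ht
    have ht1 : t + 1 = u y i := by omega
    have hle1 : (i : ℕ) + 1 ≤ (univ.filter fun i' : Fin k => t + 1 ≤ u y i').card := by
      have hsub : univ.filter (fun i' : Fin k => i' ≤ i)
          ⊆ univ.filter (fun i' : Fin k => t + 1 ≤ u y i') := by
        intro x hx
        simp only [mem_filter, mem_univ, true_and] at hx ⊢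
        calc t + 1 = u y i := ht1
          _ ≤ u y x := hanti y hx
      have hic : (univ.filter fun i' : Fin k => i' ≤ i) = Finset.Iic i := by
        ext x; simp [Finset.mem_Iic]
      have := Finset.card_le_card hsub
      rw [hic, Fin.card_Iic] at this
      exact this
    have hle2 := hcnt y t
    have hle3 := hfib y t
    have hle4 := hcount (y : ℕ) (hPprime y) t
    have hle5 : (i : ℕ) + 1 ≤ (univ.filter fun i' : Fin k => (y : ℕ) ^ (t + 1) ∣ n i').card := by
      omega
    rw [← ht1]
    by_contra hcon
    have hsub2 : (univ.filter fun i' : Fin k => (y : ℕ) ^ (t + 1) ∣ n i')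
        ⊆ univ.filter (fun i' : Fin k => i' < i) := by
      intro x hx
      simp only [mem_filter, mem_univ, true_and] at hx ⊢
      by_contra hxi
      push_neg at hxi
      exact hcon (dvd_trans hx (hchain i x hxi))
    have hio : (univ.filter fun i' : Fin k => i' < i) = Finset.Iio i := by
      ext x; simp [Finset.mem_Iio]
    have hcard2 := Finset.card_le_card hsub2
    rw [hio, Fin.card_Iio] at hcard2
    omega
  · have hcop : ∀ i : Fin k, ∀ y y' : {x // x ∈ P}, y ≠ y' →
        Nat.Coprime ((y : ℕ) ^ u y i) ((y' : ℕ) ^ u y' i) := by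
      intro i y y' hyy
      exact Nat.Coprime.pow _ _ ((Nat.coprime_primes (hPprime y) (hPprime y')).mpr
        fun hc => hyy (Subtype.ext hc))
    have crt := fun i : Fin k =>
      (zmod_pi_equiv (fun y : {x // x ∈ P} => (y : ℕ) ^ u y i) (hcop i)).some
    have hsplit : A ≃+ ∀ y : {x // x ∈ P}, ∀ x : {j : ι // toP j = y},
        ZMod ((y : ℕ) ^ ej x.1) := by
      refine φ.trans ?_
      refine ((RingEquiv.piCongrLeft (fun j : ι => ZMod (pj j ^ ej j))
        (Equiv.sigmaFiberEquiv toP)).symm.toAddEquiv).trans ?_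
      refine (piCurryAddEquiv (fun (y : {x // x ∈ P}) (x : {j : ι // toP j = y}) =>
        ZMod (pj x.1 ^ ej x.1))).trans ?_
      refine AddEquiv.piCongrRight fun y => AddEquiv.piCongrRight fun x => ?_
      exact (ZMod.ringEquivCongr
        (congrArg (· ^ ej x.1) (congrArg Subtype.val x.2))).toAddEquiv
    refine ⟨hsplit.trans ?_⟩
    refine (AddEquiv.piCongrRight fun y => ((hequiv y).some).symm).trans ?_
    refine (piCommAddEquiv (fun (y : {x // x ∈ P}) (i : Fin k) =>
      ZMod ((y : ℕ) ^ u y i))).trans ?_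
    exact AddEquiv.piCongrRight fun i => (crt i).symm

end Main

/-- **Structure of finite subgroups of finitely generated abelian groups.**
If `G ≅ ℤ^(m) ⊕ ℤ_{n_1} ⊕ … ⊕ ℤ_{n_k}` with each `n_i ≥ 2` and `n_{i+1} ∣ n_i`,
and `H ≤ G` is a finite subgroup, then `H ≅ ℤ_{m_1} ⊕ … ⊕ ℤ_{m_k}` for some
positive integers `m_i` with `m_{i+1} ∣ m_i` and `m_i ∣ n_i`. -/
theorem finite_subgroup_structure (G : Type) [Group G] (m k : ℕ) (n : Fin k → ℕ)
    (hn : ∀ i : Fin k, 2 ≤ n i)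
    (hdvd : ∀ i : Fin k, ∀ h : (i : ℕ) + 1 < k, n ⟨(i : ℕ) + 1, h⟩ ∣ n i)
    (hG : Nonempty (G ≃* Multiplicative ((Fin m → ℤ) × ((i : Fin k) → ZMod (n i)))))
    (H : Subgroup G) (hH : Finite H) :
    ∃ mm : Fin k → ℕ, (∀ i : Fin k, 1 ≤ mm i) ∧
      (∀ i : Fin k, ∀ h : (i : ℕ) + 1 < k, mm ⟨(i : ℕ) + 1, h⟩ ∣ mm i) ∧
      (∀ i : Fin k, mm i ∣ n i) ∧
      Nonempty (H ≃* Multiplicative ((i : Fin k) → ZMod (mm i))) := by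
  classical
  obtain ⟨iso⟩ := hG
  haveI : ∀ i : Fin k, NeZero (n i) := fun i => ⟨by have := hn i; omega⟩
  let g : ↥H → ((i : Fin k) → ZMod (n i)) := fun h => (Multiplicative.toAdd (iso (h : G))).2
  have hg_mul : ∀ a b : ↥H, g (a * b) = g a + g b := by
    intro a b
    show (Multiplicative.toAdd (iso ((a : G) * b))).2 = _
    rw [map_mul]
    rfl
  have hg_one : g 1 = 0 := by
    show (Multiplicative.toAdd (iso (((1 : ↥H) : G)))).2 = 0
    rw [show ((1 : ↥H) : G) = 1 from rfl, map_one]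
    rfl
  have hg_inv : ∀ a : ↥H, g a⁻¹ = - g a := by
    intro a
    show (Multiplicative.toAdd (iso (((a⁻¹ : ↥H) : G)))).2 = _
    rw [show ((a⁻¹ : ↥H) : G) = (a : G)⁻¹ from rfl, map_inv]
    rfl
  have hginj : Function.Injective g := by
    intro a b hab
    set d := a * b⁻¹ with hdd
    have hd : g d = 0 := by
      rw [hdd, hg_mul, hg_inv, hab]
      exact add_neg_cancel (g b)
    have hr : orderOf d ≠ 0 := (orderOf_pos d).ne'
    have h1 : (iso (d : G)) ^ orderOf d = 1 := by
      have h0 : d ^ orderOf d = 1 := pow_orderOf_eq_one d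
      calc (iso (d : G)) ^ orderOf d = iso (((d ^ orderOf d : ↥H) : G)) := by
            rw [← map_pow]
            congr 1
        _ = 1 := by rw [h0, show ((1 : ↥H) : G) = 1 from rfl, map_one]
    have hsm : orderOf d • Multiplicative.toAdd (iso (d : G)) = 0 := by
      rw [← toAdd_pow, h1]
      rfl
    have hfst : (Multiplicative.toAdd (iso (d : G))).1 = 0 := by
      have h4 : orderOf d • (Multiplicative.toAdd (iso (d : G))).1 = 0 := congrArg Prod.fst hsm
      funext i
      have h4i : orderOf d • ((Multiplicative.toAdd (iso (d : G))).1 i) = 0 := congrFun h4 i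
      have h4i2 : ((orderOf d : ℤ)) * ((Multiplicative.toAdd (iso (d : G))).1 i) = 0 := by
        rw [← nsmul_eq_mul]
        exact h4i
      rcases mul_eq_zero.mp h4i2 with hc | hc
      · exact absurd (Int.natCast_eq_zero.mp hc) hr
      · exact hc
    have hzero : Multiplicative.toAdd (iso (d : G)) = 0 := Prod.ext hfst hd
    have hiso1 : iso (d : G) = 1 := by
      have h5 := congrArg Multiplicative.ofAdd hzero
      simpa using h5
    have hd1 : (d : G) = 1 := by
      apply iso.injective
      rw [hiso1, map_one]
    have hdone : d = 1 := Subtype.ext hd1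
    exact mul_inv_eq_one.mp (hdd ▸ hdone)
  let S : AddSubgroup ((i : Fin k) → ZMod (n i)) :=
    { carrier := Set.range g
      zero_mem' := ⟨1, hg_one⟩
      add_mem' := by
        rintro x y ⟨a, rfl⟩ ⟨b, rfl⟩
        exact ⟨a * b, hg_mul a b⟩
      neg_mem' := by
        rintro x ⟨a, rfl⟩
        exact ⟨a⁻¹, hg_inv a⟩ }
  haveI : Finite ↥S := by
    have : Finite ((i : Fin k) → ZMod (n i)) := inferInstance
    exact Subtype.finite
  obtain ⟨mm, h1, h2, h3, ⟨e⟩⟩ := main_lemma n (fun i => by have := hn i; omega)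
    (fun i j hij => chain_dvd n hdvd ((j : ℕ) - (i : ℕ)) i j
      (by have := hij; omega))
    ↥S S.subtype Subtype.coe_injective
  refine ⟨mm, h1, (fun i h => h2 i ⟨(i : ℕ) + 1, h⟩ (by
    rw [Fin.le_def]; simp)), h3, ⟨?_⟩⟩
  let eq1 : ↥H ≃ ↥S := Equiv.ofInjective g hginj
  exact
    { toFun := fun x => Multiplicative.ofAdd (e (eq1 x))
      invFun := fun y => eq1.symm (e.symm (Multiplicative.toAdd y))
      left_inv := fun x => by
        show eq1.symm (e.symm (Multiplicative.toAdd (Multiplicative.ofAdd (e (eq1 x))))) = x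
        rw [show Multiplicative.toAdd (Multiplicative.ofAdd (e (eq1 x))) = e (eq1 x) from rfl,
          AddEquiv.symm_apply_apply, Equiv.symm_apply_apply]
      right_inv := fun y => by
        show Multiplicative.ofAdd (e (eq1 (eq1.symm (e.symm (Multiplicative.toAdd y))))) = y
        rw [Equiv.apply_symm_apply, AddEquiv.apply_symm_apply]
        rfl
      map_mul' := fun a b => by
        have heq : eq1 (a * b) = eq1 a + eq1 b := Subtype.ext (hg_mul a b)
        show Multiplicative.ofAdd (e (eq1 (a * b)))
            = Multiplicative.ofAdd (e (eq1 a)) * Multiplicative.ofAdd (e (eq1 b))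
        rw [heq, AddEquiv.map_add]
        rfl }
end

section
/- For every integer n ≥ 2, the group ℤ_n ⊕ ℤ_n is not S_2-capable. -/
/-- The commutator `[a,b] = a⁻¹ * b⁻¹ * a * b`. -/
def pcomm {E : Type} [Group E] (a b : E) : E := a⁻¹ * b⁻¹ * a * b

/-- The word `w(x,y,z,u) = [[x,y],[z,u]]` defining the variety `S_2` of metabelian groups. -/
def metaW {E : Type} [Group E] (x y z u : E) : E := pcomm (pcomm x y) (pcomm z u)

/-- The marginal set of a group `E` with respect to the variety `S_2` of metabelian
groups: all `a ∈ E` such that replacing any one argument `g` of `w` by `g * a`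
leaves the value of `w` unchanged. -/
def s2MarginalSet (E : Type) [Group E] : Set E :=
  {a : E | ∀ x y z u : E,
    metaW (x * a) y z u = metaW x y z u ∧
    metaW x (y * a) z u = metaW x y z u ∧
    metaW x y (z * a) u = metaW x y z u ∧
    metaW x y z (u * a) = metaW x y z u}

/-- `G` is `S_2`-capable if `G ≅ E / V*(E)` for some group `E`, where `V*(E)` is the
marginal (normal) subgroup of `E` with respect to the variety of metabelian groups,
i.e. the normal subgroup whose underlying set is `s2MarginalSet E`. -/
def IsS2Capable (G : Type) [Group G] : Prop :=
  ∃ (E : Type) (_ : Group E) (H : Subgroup E) (_ : H.Normal),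
    (H : Set E) = s2MarginalSet E ∧ Nonempty (G ≃* E ⧸ H)

section helpers
variable {E : Type} [Group E]

lemma pcomm_one_left (y : E) : pcomm 1 y = 1 := by simp [pcomm]
lemma pcomm_one_right (x : E) : pcomm x 1 = 1 := by simp [pcomm]
lemma pcomm_self (x : E) : pcomm x x = 1 := by simp [pcomm]
lemma pcomm_swap (x y : E) : pcomm y x = (pcomm x y)⁻¹ := by simp [pcomm]; group

lemma pcomm_eq_one_of_commute {a b : E} (h : Commute a b) : pcomm a b = 1 := by
  rw [pcomm, mul_assoc, h.eq]; group

lemma commute_of_pcomm_eq_one {a b : E} (h : pcomm a b = 1) : Commute a b := by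
  rw [pcomm] at h
  have : a * b = b * a * (a⁻¹ * b⁻¹ * a * b) := by group
  rw [h, mul_one] at this
  exact this

lemma conj_eq_of_commute {a q : E} (h : Commute a q) : q⁻¹ * a * q = a := by
  rw [mul_assoc, h.eq]; group

lemma keyA (p q d : E) (h : Commute (pcomm p d) q) :
    pcomm (p * q) d = pcomm p d * pcomm q d := by
  have base : pcomm (p * q) d = q⁻¹ * pcomm p d * q * pcomm q d := by
    simp only [pcomm]; group
  rw [base, conj_eq_of_commute h]

lemma keyB (p d d' : E) :
    pcomm p (d * d') = pcomm p d' * (d'⁻¹ * pcomm p d * d') := by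
  simp only [pcomm]; group

lemma metaW_one₁ (y z u : E) : metaW 1 y z u = 1 := by
  rw [metaW, pcomm_one_left, pcomm_one_left]
lemma metaW_one₂ (x z u : E) : metaW x 1 z u = 1 := by
  rw [metaW, pcomm_one_right, pcomm_one_left]
lemma metaW_one₃ (x y u : E) : metaW x y 1 u = 1 := by
  rw [metaW, pcomm_one_left, pcomm_one_right]
lemma metaW_one₄ (x y z : E) : metaW x y z 1 = 1 := by
  rw [metaW, pcomm_one_right, pcomm_one_right]

variable {H : Set E}
  (hmarg : ∀ a ∈ H, ∀ x y z u : E,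
    metaW (x * a) y z u = metaW x y z u ∧
    metaW x (y * a) z u = metaW x y z u ∧
    metaW x y (z * a) u = metaW x y z u ∧
    metaW x y z (u * a) = metaW x y z u)
  (hcomm : ∀ x y : E, pcomm x y ∈ H)

include hmarg in
/-- For `a ∈ H`: `[[x,y],[a,u]] = 1`. -/
lemma C1 (x y u a : E) (ha : a ∈ H) : Commute (pcomm x y) (pcomm a u) := by
  have h := (hmarg a ha x y 1 u).2.2.1
  rw [one_mul] at h
  rw [metaW, metaW, pcomm_one_left, pcomm_one_right] at h
  exact commute_of_pcomm_eq_one h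

include hmarg in
/-- For `a ∈ H`: `[[x,y],[z,a]] = 1`. -/
lemma C2 (x y z a : E) (ha : a ∈ H) : Commute (pcomm x y) (pcomm z a) := by
  have h := (hmarg a ha x y z 1).2.2.2
  rw [one_mul] at h
  rw [metaW, metaW, pcomm_one_right, pcomm_one_right] at h
  exact commute_of_pcomm_eq_one h

include hmarg hcomm in
lemma ML1 (x x' y z u : E) :
    metaW (x * x') y z u = metaW x y z u * metaW x' y z u := by
  have f1 : pcomm (x * x') y = pcomm x y * pcomm (pcomm x y) x' * pcomm x' y := by
    simp only [pcomm]; group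
  have hδd : Commute (pcomm (pcomm x y) x') (pcomm z u) :=
    (C1 hmarg z u x' (pcomm x y) (hcomm x y)).symm
  have h1 : pcomm (pcomm (pcomm x y) x') (pcomm z u) = 1 := pcomm_eq_one_of_commute hδd
  have hcdδ : Commute (pcomm (pcomm x y) (pcomm z u)) (pcomm (pcomm x y) x') :=
    C1 hmarg (pcomm x y) (pcomm z u) x' (pcomm x y) (hcomm x y)
  have e1 : pcomm (pcomm x y * pcomm (pcomm x y) x') (pcomm z u)
      = pcomm (pcomm x y) (pcomm z u) := by
    rw [keyA _ _ _ hcdδ, h1, mul_one]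
  have hc2 : Commute (pcomm (pcomm x y * pcomm (pcomm x y) x') (pcomm z u)) (pcomm x' y) := by
    rw [e1]; exact (C2 hmarg x' y (pcomm x y) (pcomm z u) (hcomm z u)).symm
  calc metaW (x * x') y z u
      = pcomm (pcomm x y * pcomm (pcomm x y) x' * pcomm x' y) (pcomm z u) := by
        rw [metaW, f1]
    _ = pcomm (pcomm x y * pcomm (pcomm x y) x') (pcomm z u)
          * pcomm (pcomm x' y) (pcomm z u) := keyA _ _ _ hc2
    _ = metaW x y z u * metaW x' y z u := by rw [e1]; rfl

include hmarg hcomm in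
lemma ML2 (x y y' z u : E) :
    metaW x (y * y') z u = metaW x y z u * metaW x y' z u := by
  have f2 : pcomm x (y * y') = pcomm x y' * pcomm x y * pcomm (pcomm x y) y' := by
    simp only [pcomm]; group
  have hδd : Commute (pcomm (pcomm x y) y') (pcomm z u) :=
    (C1 hmarg z u y' (pcomm x y) (hcomm x y)).symm
  have h1 : pcomm (pcomm (pcomm x y) y') (pcomm z u) = 1 := pcomm_eq_one_of_commute hδd
  have hc'c : Commute (pcomm (pcomm x y') (pcomm z u)) (pcomm x y) :=
    (C2 hmarg x y (pcomm x y') (pcomm z u) (hcomm z u)).symm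
  have e1 : pcomm (pcomm x y' * pcomm x y) (pcomm z u)
      = pcomm (pcomm x y') (pcomm z u) * pcomm (pcomm x y) (pcomm z u) :=
    keyA _ _ _ hc'c
  have hbig : Commute (pcomm (pcomm x y' * pcomm x y) (pcomm z u)) (pcomm (pcomm x y) y') := by
    rw [e1]
    exact Commute.mul_left
      (C1 hmarg (pcomm x y') (pcomm z u) y' (pcomm x y) (hcomm x y))
      (C1 hmarg (pcomm x y) (pcomm z u) y' (pcomm x y) (hcomm x y))
  have hswap : Commute (pcomm (pcomm x y') (pcomm z u)) (pcomm (pcomm x y) (pcomm z u)) :=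
    C2 hmarg (pcomm x y') (pcomm z u) (pcomm x y) (pcomm z u) (hcomm z u)
  calc metaW x (y * y') z u
      = pcomm (pcomm x y' * pcomm x y * pcomm (pcomm x y) y') (pcomm z u) := by
        rw [metaW, f2]
    _ = pcomm (pcomm x y' * pcomm x y) (pcomm z u)
          * pcomm (pcomm (pcomm x y) y') (pcomm z u) := keyA _ _ _ hbig
    _ = pcomm (pcomm x y') (pcomm z u) * pcomm (pcomm x y) (pcomm z u) := by
        rw [h1, mul_one, e1]
    _ = metaW x y z u * metaW x y' z u := by rw [hswap.eq]; rfl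

include hmarg hcomm in
lemma ML3 (x y z z' u : E) :
    metaW x y (z * z') u = metaW x y z u * metaW x y z' u := by
  have f3 : pcomm (z * z') u = pcomm z u * pcomm (pcomm z u) z' * pcomm z' u := by
    simp only [pcomm]; group
  have hcδ : Commute (pcomm x y) (pcomm (pcomm z u) z') :=
    C1 hmarg x y z' (pcomm z u) (hcomm z u)
  have h1 : pcomm (pcomm x y) (pcomm (pcomm z u) z') = 1 := pcomm_eq_one_of_commute hcδ
  have hconj1 : Commute (pcomm (pcomm x y) (pcomm z u)) (pcomm (pcomm z u) z') :=
    C1 hmarg (pcomm x y) (pcomm z u) z' (pcomm z u) (hcomm z u)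
  have e1 : pcomm (pcomm x y) (pcomm z u * pcomm (pcomm z u) z')
      = pcomm (pcomm x y) (pcomm z u) := by
    rw [keyB, h1, one_mul, conj_eq_of_commute hconj1]
  have hconj2 : Commute (pcomm (pcomm x y) (pcomm z u)) (pcomm z' u) :=
    (C2 hmarg z' u (pcomm x y) (pcomm z u) (hcomm z u)).symm
  have hswap : Commute (pcomm (pcomm x y) (pcomm z' u)) (pcomm (pcomm x y) (pcomm z u)) :=
    C2 hmarg (pcomm x y) (pcomm z' u) (pcomm x y) (pcomm z u) (hcomm z u)
  calc metaW x y (z * z') u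
      = pcomm (pcomm x y) (pcomm z u * pcomm (pcomm z u) z' * pcomm z' u) := by
        rw [metaW, f3]
    _ = pcomm (pcomm x y) (pcomm z' u)
          * ((pcomm z' u)⁻¹ * pcomm (pcomm x y) (pcomm z u * pcomm (pcomm z u) z')
              * pcomm z' u) := keyB _ _ _
    _ = pcomm (pcomm x y) (pcomm z' u) * pcomm (pcomm x y) (pcomm z u) := by
        rw [e1, conj_eq_of_commute hconj2]
    _ = metaW x y z u * metaW x y z' u := by rw [hswap.eq]; rfl

include hmarg hcomm in
lemma ML4 (x y z u u' : E) :
    metaW x y z (u * u') = metaW x y z u * metaW x y z u' := by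
  have f4 : pcomm z (u * u') = pcomm z u' * pcomm z u * pcomm (pcomm z u) u' := by
    simp only [pcomm]; group
  have hcδ : Commute (pcomm x y) (pcomm (pcomm z u) u') :=
    C1 hmarg x y u' (pcomm z u) (hcomm z u)
  have h1 : pcomm (pcomm x y) (pcomm (pcomm z u) u') = 1 := pcomm_eq_one_of_commute hcδ
  have hconj1 : Commute (pcomm (pcomm x y) (pcomm z u')) (pcomm z u) :=
    (C2 hmarg z u (pcomm x y) (pcomm z u') (hcomm z u')).symm
  have e1 : pcomm (pcomm x y) (pcomm z u' * pcomm z u)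
      = pcomm (pcomm x y) (pcomm z u) * pcomm (pcomm x y) (pcomm z u') := by
    rw [keyB, conj_eq_of_commute hconj1]
  have hbig : Commute (pcomm (pcomm x y) (pcomm z u) * pcomm (pcomm x y) (pcomm z u'))
      (pcomm (pcomm z u) u') :=
    Commute.mul_left
      (C1 hmarg (pcomm x y) (pcomm z u) u' (pcomm z u) (hcomm z u))
      (C1 hmarg (pcomm x y) (pcomm z u') u' (pcomm z u) (hcomm z u))
  calc metaW x y z (u * u')
      = pcomm (pcomm x y) (pcomm z u' * pcomm z u * pcomm (pcomm z u) u') := by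
        rw [metaW, f4]
    _ = pcomm (pcomm x y) (pcomm (pcomm z u) u')
          * ((pcomm (pcomm z u) u')⁻¹ * pcomm (pcomm x y) (pcomm z u' * pcomm z u)
              * pcomm (pcomm z u) u') := keyB _ _ _
    _ = metaW x y z u * metaW x y z u' := by
        rw [h1, one_mul, e1, conj_eq_of_commute (e1 ▸ hbig)]; rfl

include hmarg in
lemma stripX {a : E} (ha : a ∈ H) (y z u : E) : metaW a y z u = 1 := by
  have h := (hmarg a ha 1 y z u).1
  rw [one_mul, metaW_one₁] at h; exact h
include hmarg in
lemma stripY {a : E} (ha : a ∈ H) (x z u : E) : metaW x a z u = 1 := by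
  have h := (hmarg a ha x 1 z u).2.1
  rw [one_mul, metaW_one₂] at h; exact h
include hmarg in
lemma stripZ {a : E} (ha : a ∈ H) (x y u : E) : metaW x y a u = 1 := by
  have h := (hmarg a ha x y 1 u).2.2.1
  rw [one_mul, metaW_one₃] at h; exact h
include hmarg in
lemma stripU {a : E} (ha : a ∈ H) (x y z : E) : metaW x y z a = 1 := by
  have h := (hmarg a ha x y z 1).2.2.2
  rw [one_mul, metaW_one₄] at h; exact h

include hmarg hcomm in
lemma metaW_all_one (e₁ e₂ : E)
    (hgen : ∀ g : E, ∃ (a b : ℕ) (h : E), h ∈ H ∧ g = e₁ ^ a * e₂ ^ b * h) :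
    ∀ x y z u : E, metaW x y z u = 1 := by
  classical
  set T : Set E := {e₁, e₂} ∪ H with hT
  have he₁T : e₁ ∈ T := Or.inl (Set.mem_insert _ _)
  have he₂T : e₂ ∈ T := Or.inl (Set.mem_insert_of_mem _ rfl)
  have htop : ∀ g : E, g ∈ Subgroup.closure T := by
    intro g
    obtain ⟨a, b, h, hh, rfl⟩ := hgen g
    exact mul_mem
      (mul_mem (pow_mem (Subgroup.subset_closure he₁T) a)
        (pow_mem (Subgroup.subset_closure he₂T) b))
      (Subgroup.subset_closure (Or.inr hh))
  have small : ∀ p q : E, (p = e₁ ∨ p = e₂) → (q = e₁ ∨ q = e₂) →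
      pcomm p q ∈ Subgroup.zpowers (pcomm e₁ e₂) := by
    intro p q hp hq
    rcases hp with hp | hp <;> rcases hq with hq | hq <;> rw [hp, hq]
    · rw [pcomm_self]; exact one_mem _
    · exact Subgroup.mem_zpowers (pcomm e₁ e₂)
    · rw [pcomm_swap e₁ e₂]; exact inv_mem (Subgroup.mem_zpowers (pcomm e₁ e₂))
    · rw [pcomm_self]; exact one_mem _
  have hbase : ∀ x ∈ T, ∀ y ∈ T, ∀ z ∈ T, ∀ u ∈ T, metaW x y z u = 1 := by
    intro x hx y hy z hz u hu
    rcases hx with hx | hx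
    · rcases hy with hy | hy
      · rcases hz with hz | hz
        · rcases hu with hu | hu
          · have h1 := small x y (by simpa using hx) (by simpa using hy)
            have h2 := small z u (by simpa using hz) (by simpa using hu)
            obtain ⟨k, hk⟩ := Subgroup.mem_zpowers_iff.mp h1
            obtain ⟨m, hm⟩ := Subgroup.mem_zpowers_iff.mp h2
            rw [metaW, ← hk, ← hm]
            exact pcomm_eq_one_of_commute ((Commute.refl _).zpow_zpow k m)
          · exact stripU hmarg hu x y z
        · exact stripZ hmarg hz x y u
      · exact stripY hmarg hy x z u
    · exact stripX hmarg hx y z u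
  have step4 : ∀ x ∈ T, ∀ y ∈ T, ∀ z ∈ T, ∀ u : E, metaW x y z u = 1 := by
    intro x hx y hy z hz u
    refine Subgroup.closure_induction (p := fun g _ => metaW x y z g = 1)
      (fun g hg => hbase x hx y hy z hz g hg) (metaW_one₄ x y z)
      (fun a b _ _ ha hb => by show metaW x y z (a*b) = 1; rw [ML4 hmarg hcomm, ha, hb, mul_one])
      (fun a _ ha => ?_) (htop u)
    have h := ML4 hmarg hcomm x y z a a⁻¹
    rw [mul_inv_cancel, metaW_one₄, ha, one_mul] at h
    exact h.symm
  have step3 : ∀ x ∈ T, ∀ y ∈ T, ∀ z u : E, metaW x y z u = 1 := by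
    intro x hx y hy z u
    refine Subgroup.closure_induction (p := fun g _ => metaW x y g u = 1)
      (fun g hg => step4 x hx y hy g hg u) (metaW_one₃ x y u)
      (fun a b _ _ ha hb => by show metaW x y (a*b) u = 1; rw [ML3 hmarg hcomm, ha, hb, mul_one])
      (fun a _ ha => ?_) (htop z)
    have h := ML3 hmarg hcomm x y a a⁻¹ u
    rw [mul_inv_cancel, metaW_one₃, ha, one_mul] at h
    exact h.symm
  have step2 : ∀ x ∈ T, ∀ y z u : E, metaW x y z u = 1 := by
    intro x hx y z u
    refine Subgroup.closure_induction (p := fun g _ => metaW x g z u = 1)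
      (fun g hg => step3 x hx g hg z u) (metaW_one₂ x z u)
      (fun a b _ _ ha hb => by show metaW x (a*b) z u = 1; rw [ML2 hmarg hcomm, ha, hb, mul_one])
      (fun a _ ha => ?_) (htop y)
    have h := ML2 hmarg hcomm x a a⁻¹ z u
    rw [mul_inv_cancel, metaW_one₂, ha, one_mul] at h
    exact h.symm
  intro x y z u
  refine Subgroup.closure_induction (p := fun g _ => metaW g y z u = 1)
    (fun g hg => step2 g hg y z u) (metaW_one₁ y z u)
    (fun a b _ _ ha hb => by show metaW (a*b) y z u = 1; rw [ML1 hmarg hcomm, ha, hb, mul_one])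
    (fun a _ ha => ?_) (htop x)
  have h := ML1 hmarg hcomm a a⁻¹ y z u
  rw [mul_inv_cancel, metaW_one₁, ha, one_mul] at h
  exact h.symm

end helpers

/-- For every `n ≥ 2`, the group `ℤ_n ⊕ ℤ_n` is not `S_2`-capable. -/
theorem zmod_sq_not_s2Capable (n : ℕ) (hn : 2 ≤ n) :
    ¬ IsS2Capable (Multiplicative (ZMod n × ZMod n)) := by
  haveI : NeZero n := ⟨by omega⟩
  haveI : Fact (1 < n) := ⟨hn⟩
  rintro ⟨E, instE, H, hnorm, hset, ⟨φ⟩⟩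
  haveI := hnorm
  let π : E →* E ⧸ H := QuotientGroup.mk' H
  have hq : ∀ p q : E ⧸ H, p * q = q * p := by
    intro p q
    obtain ⟨p', rfl⟩ := φ.surjective p
    obtain ⟨q', rfl⟩ := φ.surjective q
    rw [← map_mul, ← map_mul, mul_comm]
  have hcommH : ∀ x y : E, pcomm x y ∈ (H : Set E) := by
    intro x y
    have h1 : π (pcomm x y) = pcomm (π x) (π y) := by
      simp [pcomm, map_mul, map_inv]
    have h2 : pcomm (π x) (π y) = 1 := pcomm_eq_one_of_commute (hq (π x) (π y))
    have : π (pcomm x y) = 1 := by rw [h1, h2]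
    exact (QuotientGroup.eq_one_iff (pcomm x y)).mp this
  have hmarg : ∀ a ∈ (H : Set E), ∀ x y z u : E,
      metaW (x * a) y z u = metaW x y z u ∧
      metaW x (y * a) z u = metaW x y z u ∧
      metaW x y (z * a) u = metaW x y z u ∧
      metaW x y z (u * a) = metaW x y z u := by
    intro a ha
    have : a ∈ s2MarginalSet E := by rw [← hset]; exact ha
    exact this
  obtain ⟨e₁, he₁⟩ := QuotientGroup.mk'_surjective H
    (φ (Multiplicative.ofAdd ((1 : ZMod n), (0 : ZMod n))))
  obtain ⟨e₂, he₂⟩ := QuotientGroup.mk'_surjective H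
    (φ (Multiplicative.ofAdd ((0 : ZMod n), (1 : ZMod n))))
  have hgen : ∀ g : E, ∃ (a b : ℕ) (h : E), h ∈ (H : Set E) ∧ g = e₁ ^ a * e₂ ^ b * h := by
    intro g
    set q := φ.symm (π g) with hqdef
    set i := (Multiplicative.toAdd q).1 with hi
    set j := (Multiplicative.toAdd q).2 with hj
    have hpowq : (Multiplicative.ofAdd ((1 : ZMod n), (0 : ZMod n))) ^ i.val
        * (Multiplicative.ofAdd ((0 : ZMod n), (1 : ZMod n))) ^ j.val = q := by
      rw [← ofAdd_nsmul, ← ofAdd_nsmul, ← ofAdd_add]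
      have : i.val • ((1 : ZMod n), (0 : ZMod n)) + j.val • ((0 : ZMod n), (1 : ZMod n))
          = (i, j) := by
        ext
        · simp [nsmul_eq_mul, ZMod.natCast_rightInverse i]
        · simp [nsmul_eq_mul, ZMod.natCast_rightInverse j]
      rw [this, hi, hj]
      rfl
    have hφq : φ (Multiplicative.ofAdd ((1 : ZMod n), (0 : ZMod n))) ^ i.val
        * φ (Multiplicative.ofAdd ((0 : ZMod n), (1 : ZMod n))) ^ j.val = φ q := by
      rw [← hpowq, map_mul, map_pow, map_pow]
    have key : π (e₁ ^ i.val * e₂ ^ j.val) = π g := by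
      rw [map_mul, map_pow, map_pow, he₁, he₂, hφq, hqdef, MulEquiv.apply_symm_apply]
    refine ⟨i.val, j.val, (e₁ ^ i.val * e₂ ^ j.val)⁻¹ * g, ?_, ?_⟩
    · have : π ((e₁ ^ i.val * e₂ ^ j.val)⁻¹ * g) = 1 := by
        rw [map_mul, map_inv, key]; simp
      exact (QuotientGroup.eq_one_iff _).mp this
    · rw [mul_inv_cancel_left]
  have hw := metaW_all_one hmarg hcommH e₁ e₂ hgen
  have hall : ∀ g : E, g ∈ H := by
    intro g
    have hg : g ∈ s2MarginalSet E := by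
      intro x y z u
      refine ⟨?_, ?_, ?_, ?_⟩ <;> rw [hw, hw]
    rw [← SetLike.mem_coe, hset]; exact hg
  have htriv : ∀ p : E ⧸ H, p = 1 := by
    intro p
    obtain ⟨e, rfl⟩ := QuotientGroup.mk'_surjective H p
    exact (QuotientGroup.eq_one_iff e).mpr (hall e)
  have h1 : Multiplicative.ofAdd ((1 : ZMod n), (0 : ZMod n)) = 1 := by
    apply φ.injective
    rw [map_one]; exact htriv _
  have h2 : ((1 : ZMod n), (0 : ZMod n)) = ((0 : ZMod n), (0 : ZMod n)) := by
    simpa using congrArg Multiplicative.toAdd h1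
  exact one_ne_zero (congrArg Prod.fst h2)
end
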